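/- arXiv:1303.3794 — 7 statements merged into one kernel-verified Lean document; each statement's English description precedes it below -/
import Mathlib

section
/- For every matrix X with entries in the ring Z/p^k (p prime, k ≥ 1) of size n × m, there exist an invertible n × n matrix Q and an invertible m × m matrix S over Z/p^k such that the product QXS is in normal form, i.e., its (i,j)-entry equals δ_{i,j}·p^{r_i} for integers 0 ≤ r_1 ≤ r_2 ≤ ⋯ ≤ r_n ≤ k. -/
namespace SNF

variable {p k : ℕ}

noncomputable def ordZ (p k : ℕ) (x : ZMod (p ^ k)) : ℕ :=
  if x = 0 then k else padicValNat p x.val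

lemma natCast_val_eq (hp : p.Prime) (x : ZMod (p ^ k)) : ((x.val : ℕ) : ZMod (p ^ k)) = x := by
  haveI : NeZero (p ^ k) := ⟨pow_ne_zero _ hp.pos.ne'⟩
  exact ZMod.natCast_rightInverse x

lemma val_ne_zero (hp : p.Prime) {x : ZMod (p ^ k)} (hx : x ≠ 0) : x.val ≠ 0 := by
  haveI : NeZero (p ^ k) := ⟨pow_ne_zero _ hp.pos.ne'⟩
  simpa [ZMod.val_eq_zero] using hx

lemma ordZ_le (hp : p.Prime) (x : ZMod (p ^ k)) : ordZ p k x ≤ k := by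
  haveI : NeZero (p ^ k) := ⟨pow_ne_zero _ hp.pos.ne'⟩
  unfold ordZ
  split
  · exact le_refl k
  · rename_i hx
    have hv : x.val ≠ 0 := val_ne_zero hp hx
    have h1 : p ^ (padicValNat p x.val) ∣ x.val := pow_padicValNat_dvd
    have h2 : p ^ (padicValNat p x.val) ≤ x.val := Nat.le_of_dvd (Nat.pos_of_ne_zero hv) h1
    have h3 : x.val < p ^ k := ZMod.val_lt x
    have := lt_of_le_of_lt h2 h3
    exact le_of_lt ((pow_lt_pow_iff_right₀ hp.one_lt).mp this)

lemma ordZ_spec (hp : p.Prime) (x : ZMod (p ^ k)) :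
    ∃ u : (ZMod (p ^ k))ˣ, x = (u : ZMod (p ^ k)) * (p : ZMod (p ^ k)) ^ (ordZ p k x) := by
  haveI : NeZero (p ^ k) := ⟨pow_ne_zero _ hp.pos.ne'⟩
  unfold ordZ
  split
  · rename_i hx
    refine ⟨1, ?_⟩
    have h0 : ((p : ZMod (p ^ k)) ^ k) = 0 := by
      have h1 : ((p ^ k : ℕ) : ZMod (p ^ k)) = 0 := ZMod.natCast_self _
      rw [Nat.cast_pow] at h1
      exact h1
    simp [hx, h0]
  · rename_i hx
    set v := padicValNat p x.val with hv
    have hval : x.val ≠ 0 := val_ne_zero hp hx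
    haveI : Fact p.Prime := ⟨hp⟩
    have h1 : p ^ v ∣ x.val := pow_padicValNat_dvd
    set s := x.val / p ^ v with hs
    have hxs : x.val = p ^ v * s := (Nat.mul_div_cancel' h1).symm
    have hps : ¬ p ∣ s := by
      intro hdvd
      have : p ^ (v + 1) ∣ x.val := by
        obtain ⟨c, hc⟩ := hdvd
        exact ⟨c, by rw [hxs, hc]; ring⟩
      exact pow_succ_padicValNat_not_dvd hval this
    have hco : Nat.Coprime s (p ^ k) :=
      Nat.Coprime.pow_right _ ((Nat.coprime_comm.mp (hp.coprime_iff_not_dvd.mpr hps)))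
    have hunit : IsUnit ((s : ℕ) : ZMod (p ^ k)) := (ZMod.isUnit_iff_coprime s (p ^ k)).mpr hco
    obtain ⟨u, hu⟩ := hunit
    refine ⟨u, ?_⟩
    have : x = ((p ^ v * s : ℕ) : ZMod (p ^ k)) := by
      rw [← hxs, natCast_val_eq hp]
    rw [this]
    push_cast
    rw [hu]
    ring

lemma dvd_of_le_ordZ (hp : p.Prime) {a : ℕ} {x : ZMod (p ^ k)} (ha : a ≤ ordZ p k x) :
    (p : ZMod (p ^ k)) ^ a ∣ x := by
  obtain ⟨u, hu⟩ := ordZ_spec hp x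
  have h2 : (p : ZMod (p ^ k)) ^ a ∣ (p : ZMod (p ^ k)) ^ (ordZ p k x) := pow_dvd_pow _ ha
  rw [hu]
  exact h2.mul_left _

lemma le_ordZ (hp : p.Prime) {t : ℕ} (ht : t ≤ k) {x : ZMod (p ^ k)}
    (h : (p : ZMod (p ^ k)) ^ t ∣ x) : t ≤ ordZ p k x := by
  haveI : NeZero (p ^ k) := ⟨pow_ne_zero _ hp.pos.ne'⟩
  haveI : Fact p.Prime := ⟨hp⟩
  unfold ordZ
  split
  · exact ht
  · rename_i hx
    obtain ⟨c, hc⟩ := h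
    have hval : x.val ≠ 0 := val_ne_zero hp hx
    have hx2 : x = ((p ^ t * c.val : ℕ) : ZMod (p ^ k)) := by
      push_cast
      rw [natCast_val_eq hp, hc]
    have hvv : x.val = (p ^ t * c.val) % (p ^ k) := by
      rw [hx2, ZMod.val_natCast]
    have hdvd : p ^ t ∣ x.val := by
      rw [hvv]
      exact (Nat.dvd_mod_iff (pow_dvd_pow p ht)).mpr (Dvd.intro _ rfl)
    exact (padicValNat_dvd_iff_le hval).mp hdvd


section Mat

variable {R : Type*} [CommRing R]

/-- Equivalence of matrices under multiplication by units. -/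
def MEq {n m : ℕ} (X Y : Matrix (Fin n) (Fin m) R) : Prop :=
  ∃ (Q : Matrix (Fin n) (Fin n) R) (S : Matrix (Fin m) (Fin m) R), IsUnit Q ∧ IsUnit S ∧ Q * X * S = Y

lemma MEq.refl {n m : ℕ} (X : Matrix (Fin n) (Fin m) R) : MEq X X :=
  ⟨1, 1, isUnit_one, isUnit_one, by simp⟩

lemma MEq.trans {n m : ℕ} {X Y Z : Matrix (Fin n) (Fin m) R} (h1 : MEq X Y) (h2 : MEq Y Z) :
    MEq X Z := by
  obtain ⟨Q1, S1, hQ1, hS1, rfl⟩ := h1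
  obtain ⟨Q2, S2, hQ2, hS2, rfl⟩ := h2
  exact ⟨Q2 * Q1, S1 * S2, hQ2.mul hQ1, hS1.mul hS2, by simp only [Matrix.mul_assoc]⟩

lemma MEq.mul_left {n m : ℕ} (X : Matrix (Fin n) (Fin m) R) {Q : Matrix (Fin n) (Fin n) R}
    (hQ : IsUnit Q) : MEq X (Q * X) :=
  ⟨Q, 1, hQ, isUnit_one, by simp⟩

lemma MEq.mul_right {n m : ℕ} (X : Matrix (Fin n) (Fin m) R) {S : Matrix (Fin m) (Fin m) R}
    (hS : IsUnit S) : MEq X (X * S) :=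
  ⟨1, S, isUnit_one, hS, by simp⟩

lemma MEq.dvd {n m : ℕ} {X Y : Matrix (Fin n) (Fin m) R} (h : MEq X Y) {d : R}
    (hX : ∀ i j, d ∣ X i j) : ∀ i j, d ∣ Y i j := by
  obtain ⟨Q, S, hQ, hS, rfl⟩ := h
  intro i j
  rw [Matrix.mul_apply]
  refine Finset.dvd_sum fun l _ => ?_
  rw [Matrix.mul_apply]
  exact dvd_mul_of_dvd_left (Finset.dvd_sum fun l' _ => (hX l' l).mul_left _) _

/-- Permutation matrix. -/
def permMat {n : ℕ} (σ : Equiv.Perm (Fin n)) : Matrix (Fin n) (Fin n) R :=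
  Matrix.of fun i j => if σ i = j then 1 else 0

lemma permMat_mul {n m : ℕ} (σ : Equiv.Perm (Fin n)) (X : Matrix (Fin n) (Fin m) R) (i j) :
    (((permMat σ : Matrix (Fin n) (Fin n) R) * X : Matrix (Fin n) (Fin m) R)) i j = X (σ i) j := by
  rw [Matrix.mul_apply]
  simp [permMat]

lemma mul_permMat {n m : ℕ} (σ : Equiv.Perm (Fin m)) (X : Matrix (Fin n) (Fin m) R) (i j) :
    ((X * (permMat σ : Matrix (Fin m) (Fin m) R) : Matrix (Fin n) (Fin m) R)) i j = X i (σ.symm j) := by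
  rw [Matrix.mul_apply]
  have : ∀ l : Fin m, (permMat σ l j : R) = if l = σ.symm j then 1 else 0 := by
    intro l
    simp only [permMat, Matrix.of_apply]
    congr 1
    simp [Equiv.apply_eq_iff_eq_symm_apply]
  simp only [this, mul_ite, mul_one, mul_zero]
  simp

lemma permMat_mul_permMat {n : ℕ} (σ τ : Equiv.Perm (Fin n)) :
    ((permMat σ : Matrix (Fin n) (Fin n) R) * permMat τ : Matrix (Fin n) (Fin n) R) = permMat (τ * σ) := by
  ext i j
  rw [permMat_mul]
  simp [permMat]
  exact if_congr Iff.rfl rfl rfl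

lemma isUnit_permMat {n : ℕ} (σ : Equiv.Perm (Fin n)) :
    IsUnit (permMat σ : Matrix (Fin n) (Fin n) R) := by
  have h1 : ((permMat σ : Matrix (Fin n) (Fin n) R) * permMat σ⁻¹ : Matrix (Fin n) (Fin n) R) = 1 := by
    rw [permMat_mul_permMat]
    ext i j
    simp [permMat, Matrix.one_apply]
  exact (Matrix.isUnit_iff_isUnit_det _).mpr (Matrix.isUnit_det_of_right_inverse h1)


/-- Bordered matrix `[[a, 0], [0, Y]]`. -/
def bd {n m : ℕ} (a : R) (Y : Matrix (Fin n) (Fin m) R) : Matrix (Fin (n+1)) (Fin (m+1)) R :=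
  Matrix.of (Fin.cons (Fin.cons a 0) (fun i => Fin.cons 0 (Y i)))

@[simp] lemma bd_zero_zero {n m : ℕ} (a : R) (Y : Matrix (Fin n) (Fin m) R) :
    bd a Y 0 0 = a := rfl

@[simp] lemma bd_zero_succ {n m : ℕ} (a : R) (Y : Matrix (Fin n) (Fin m) R) (j : Fin m) :
    bd a Y 0 j.succ = 0 := by
  simp [bd]

@[simp] lemma bd_succ_zero {n m : ℕ} (a : R) (Y : Matrix (Fin n) (Fin m) R) (i : Fin n) :
    bd a Y i.succ 0 = 0 := by
  simp [bd]

@[simp] lemma bd_succ_succ {n m : ℕ} (a : R) (Y : Matrix (Fin n) (Fin m) R) (i : Fin n) (j : Fin m) :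
    bd a Y i.succ j.succ = Y i j := by
  simp [bd]

lemma bd_mul {n m l : ℕ} (a b : R) (Y : Matrix (Fin n) (Fin m) R) (Z : Matrix (Fin m) (Fin l) R) :
    ((bd a Y : Matrix (Fin (n+1)) (Fin (m+1)) R) * bd b Z : Matrix (Fin (n+1)) (Fin (l+1)) R) = bd (a * b) (Y * Z) := by
  ext i j
  rw [Matrix.mul_apply, Fin.sum_univ_succ]
  induction i using Fin.cases with
  | zero =>
    induction j using Fin.cases with
    | zero => simp
    | succ j => simp
  | succ i =>
    induction j using Fin.cases with
    | zero => simp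
    | succ j => simp [Matrix.mul_apply]

lemma bd_one {n : ℕ} : (bd 1 1 : Matrix (Fin (n+1)) (Fin (n+1)) R) = 1 := by
  ext i j
  induction i using Fin.cases with
  | zero =>
    induction j using Fin.cases with
    | zero => simp
    | succ j => simp [Matrix.one_apply, (Fin.succ_ne_zero j).symm]
  | succ i =>
    induction j using Fin.cases with
    | zero => simp [Matrix.one_apply, Fin.succ_ne_zero i]
    | succ j => simp [Matrix.one_apply, Fin.succ_injective, Fin.succ_inj]

lemma isUnit_bd {n : ℕ} {Q : Matrix (Fin n) (Fin n) R} (hQ : IsUnit Q) :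
    IsUnit (bd 1 Q : Matrix (Fin (n+1)) (Fin (n+1)) R) := by
  obtain ⟨u, hu⟩ := hQ
  have h1 : (bd 1 Q * bd 1 ((u⁻¹ : _) : Matrix (Fin n) (Fin n) R)
      : Matrix (Fin (n+1)) (Fin (n+1)) R) = 1 := by
    rw [bd_mul]
    have : Q * ((u⁻¹ : _) : Matrix (Fin n) (Fin n) R) = 1 := by
      rw [← hu]; exact u.mul_inv
    rw [this, one_mul, bd_one]
  exact (Matrix.isUnit_iff_isUnit_det _).mpr (Matrix.isUnit_det_of_right_inverse h1)

lemma MEq.bd_congr {n m : ℕ} {Y Z : Matrix (Fin n) (Fin m) R} (a : R) (h : MEq Y Z) :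
    MEq (bd a Y) (bd a Z) := by
  obtain ⟨Q, S, hQ, hS, rfl⟩ := h
  exact ⟨bd 1 Q, bd 1 S, isUnit_bd hQ, isUnit_bd hS, by
    rw [bd_mul, bd_mul, one_mul, mul_one]⟩

/-- Row-clearing elementary matrix: `1 + N` where `N i 0 = g i` for `i ≠ 0`. -/
def rowE {n : ℕ} (g : Fin (n+1) → R) : Matrix (Fin (n+1)) (Fin (n+1)) R :=
  1 + Matrix.of (fun i j => if i ≠ 0 ∧ j = 0 then g i else 0)

lemma rowE_mul {n m : ℕ} (g : Fin (n+1) → R) (X : Matrix (Fin (n+1)) (Fin m) R) (i j) :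
    ((rowE g * X : Matrix (Fin (n+1)) (Fin m) R)) i j
      = X i j + if i ≠ 0 then g i * X 0 j else 0 := by
  rw [rowE, Matrix.add_mul, Matrix.one_mul, Matrix.add_apply, Matrix.mul_apply]
  congr 1
  by_cases hi : i = 0
  · simp [hi]
  · rw [if_pos hi]
    rw [Finset.sum_eq_single 0]
    · simp [hi]
    · intro b _ hb
      simp [hb]
    · simp

lemma isUnit_rowE {n : ℕ} (g : Fin (n+1) → R) : IsUnit (rowE g : Matrix (Fin (n+1)) (Fin (n+1)) R) := by
  have h1 : (rowE g * rowE (-g) : Matrix (Fin (n+1)) (Fin (n+1)) R) = 1 := by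
    ext i j
    rw [rowE_mul]
    simp only [rowE, Matrix.add_apply, Matrix.one_apply, Matrix.of_apply, Pi.neg_apply]
    by_cases hi : i = 0
    · simp [hi]
    · by_cases hj : j = 0
      · simp [hi, hj]
        try ring
      · simp [hi, hj, eq_comm]
  exact (Matrix.isUnit_iff_isUnit_det _).mpr (Matrix.isUnit_det_of_right_inverse h1)

/-- Column-clearing elementary matrix: `1 + M` where `M 0 j = h j` for `j ≠ 0`. -/
def colE {m : ℕ} (h : Fin (m+1) → R) : Matrix (Fin (m+1)) (Fin (m+1)) R :=
  1 + Matrix.of (fun i j => if i = 0 ∧ j ≠ 0 then h j else 0)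

lemma mul_colE {n m : ℕ} (h : Fin (m+1) → R) (X : Matrix (Fin n) (Fin (m+1)) R) (i j) :
    ((X * colE h : Matrix (Fin n) (Fin (m+1)) R)) i j
      = X i j + if j ≠ 0 then X i 0 * h j else 0 := by
  rw [colE, Matrix.mul_add, Matrix.mul_one, Matrix.add_apply, Matrix.mul_apply]
  congr 1
  by_cases hj : j = 0
  · simp [hj]
  · rw [if_pos hj]
    rw [Finset.sum_eq_single 0]
    · simp [hj]
    · intro b _ hb
      simp [hb]
    · simp

lemma isUnit_colE {m : ℕ} (h : Fin (m+1) → R) : IsUnit (colE h : Matrix (Fin (m+1)) (Fin (m+1)) R) := by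
  have h1 : (colE (-h) * colE h : Matrix (Fin (m+1)) (Fin (m+1)) R) = 1 := by
    ext i j
    rw [mul_colE]
    simp only [colE, Matrix.add_apply, Matrix.one_apply, Matrix.of_apply, Pi.neg_apply]
    by_cases hj : j = 0
    · simp [hj]
    · by_cases hi : i = 0
      · simp [hi, hj]
        try ring
      · simp [hi, hj, eq_comm]
  exact (Matrix.isUnit_iff_isUnit_det _).mpr (Matrix.isUnit_det_of_left_inverse h1)

lemma bd_smul_mul {n m : ℕ} (c : R) (X : Matrix (Fin (n+1)) (Fin (m+1)) R) (i j) :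
    (((bd c 1 : Matrix (Fin (n+1)) (Fin (n+1)) R) * X : Matrix (Fin (n+1)) (Fin (m+1)) R)) i j
      = if i = 0 then c * X 0 j else X i j := by
  rw [Matrix.mul_apply, Fin.sum_univ_succ]
  induction i using Fin.cases with
  | zero => simp
  | succ i =>
    simp [bd_succ_zero, Fin.succ_ne_zero, Matrix.one_apply, ite_mul]

lemma isUnit_bd_unit {n : ℕ} (u : Rˣ) :
    IsUnit (bd (u : R) 1 : Matrix (Fin (n+1)) (Fin (n+1)) R) := by
  have h1 : ((bd (u : R) 1 : Matrix (Fin (n+1)) (Fin (n+1)) R) * bd ((u⁻¹ : Rˣ) : R) 1 : Matrix (Fin (n+1)) (Fin (n+1)) R) = 1 := by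
    rw [bd_mul, mul_one]
    rw [u.mul_inv, bd_one]
  exact (Matrix.isUnit_iff_isUnit_det _).mpr (Matrix.isUnit_det_of_right_inverse h1)

end Mat

section Step

variable {p k : ℕ}

lemma step (hp : p.Prime) {n m : ℕ} (X : Matrix (Fin (n+1)) (Fin (m+1)) (ZMod (p ^ k)))
    {a : ℕ} (i₀ : Fin (n+1)) (j₀ : Fin (m+1))
    (hmin : ∀ i j, a ≤ ordZ p k (X i j)) (h00 : ordZ p k (X i₀ j₀) = a) :
    ∃ Y : Matrix (Fin n) (Fin m) (ZMod (p ^ k)),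
      MEq X (bd ((p : ZMod (p ^ k)) ^ a) Y) ∧
      ∀ i j, (p : ZMod (p ^ k)) ^ a ∣ Y i j := by
  obtain ⟨u, hu⟩ := ordZ_spec hp (X i₀ j₀)
  rw [h00] at hu
  -- move the minimal entry to position (0,0)
  set σ : Equiv.Perm (Fin (n+1)) := Equiv.swap 0 i₀ with hσ
  set τ : Equiv.Perm (Fin (m+1)) := Equiv.swap 0 j₀ with hτ
  set X₁ : Matrix (Fin (n+1)) (Fin (m+1)) (ZMod (p ^ k)) := (permMat σ : Matrix (Fin (n+1)) (Fin (n+1)) (ZMod (p ^ k))) * X * (permMat τ : Matrix (Fin (m+1)) (Fin (m+1)) (ZMod (p ^ k))) with hX₁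
  have meq1 : MEq X X₁ :=
    (MEq.mul_left X (isUnit_permMat σ)).trans (MEq.mul_right _ (isUnit_permMat τ))
  have hX₁00 : X₁ 0 0 = X i₀ j₀ := by
    have e1 : σ 0 = i₀ := Equiv.swap_apply_left 0 i₀
    have e2 : τ.symm 0 = j₀ := by
      rw [hτ, Equiv.symm_swap]
      exact Equiv.swap_apply_left 0 j₀
    rw [hX₁, mul_permMat, permMat_mul, e1, e2]
  -- scale row 0 so that the (0,0) entry becomes p^a
  set X₂ : Matrix (Fin (n+1)) (Fin (m+1)) (ZMod (p ^ k)) := (bd ((u⁻¹ : _ˣ) : ZMod (p ^ k)) 1 : Matrix (Fin (n+1)) (Fin (n+1)) (ZMod (p ^ k))) * X₁ with hX₂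
  have meq2 : MEq X X₂ := meq1.trans (MEq.mul_left _ (isUnit_bd_unit u⁻¹))
  have hX₂00 : X₂ 0 0 = (p : ZMod (p ^ k)) ^ a := by
    rw [hX₂, bd_smul_mul, if_pos rfl, hX₁00, hu, ← mul_assoc, u.inv_mul, one_mul]
  have hd2 : ∀ i j, (p : ZMod (p ^ k)) ^ a ∣ X₂ i j :=
    meq2.dvd (fun i j => dvd_of_le_ordZ hp (hmin i j))
  choose c hc using hd2
  -- clear column 0
  set X₃ : Matrix (Fin (n+1)) (Fin (m+1)) (ZMod (p ^ k)) := rowE (fun i => -(c i 0)) * X₂ with hX₃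
  have meq3 : MEq X X₃ := meq2.trans (MEq.mul_left _ (isUnit_rowE _))
  have hX₃e : ∀ i j, X₃ i j = X₂ i j + if i ≠ 0 then -(c i 0) * X₂ 0 j else 0 := by
    intro i j
    rw [hX₃, rowE_mul]
  have hX₃0 : ∀ j, X₃ 0 j = X₂ 0 j := by
    intro j
    rw [hX₃e]
    simp
  have hX₃00 : X₃ 0 0 = (p : ZMod (p ^ k)) ^ a := by rw [hX₃0, hX₂00]
  have hX₃c0 : ∀ i, i ≠ 0 → X₃ i 0 = 0 := by
    intro i hi
    rw [hX₃e, if_pos hi, hX₂00, hc i 0]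
    ring
  -- clear row 0
  set X₄ : Matrix (Fin (n+1)) (Fin (m+1)) (ZMod (p ^ k)) := X₃ * colE (fun j => -(c 0 j)) with hX₄
  have meq4 : MEq X X₄ := meq3.trans (MEq.mul_right _ (isUnit_colE _))
  have hX₄e : ∀ i j, X₄ i j = X₃ i j + if j ≠ 0 then X₃ i 0 * -(c 0 j) else 0 := by
    intro i j
    rw [hX₄, mul_colE]
  have hX₄00 : X₄ 0 0 = (p : ZMod (p ^ k)) ^ a := by
    rw [hX₄e, hX₃00]
    simp
  have hX₄r0 : ∀ j, j ≠ 0 → X₄ 0 j = 0 := by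
    intro j hj
    rw [hX₄e, if_pos hj, hX₃00, hX₃0, hc 0 j]
    ring
  have hX₄c0 : ∀ i, i ≠ 0 → X₄ i 0 = 0 := by
    intro i hi
    rw [hX₄e, hX₃c0 i hi]
    simp
  refine ⟨Matrix.of (fun (i : Fin n) (j : Fin m) => X₄ i.succ j.succ), ?_, ?_⟩
  · have : X₄ = bd ((p : ZMod (p ^ k)) ^ a)
        (Matrix.of (fun (i : Fin n) (j : Fin m) => X₄ i.succ j.succ)) := by
      ext i j
      induction i using Fin.cases with
      | zero =>
        induction j using Fin.cases with
        | zero => rw [bd_zero_zero, hX₄00]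
        | succ j => rw [bd_zero_succ, hX₄r0 _ (Fin.succ_ne_zero j)]
      | succ i =>
        induction j using Fin.cases with
        | zero => rw [bd_succ_zero, hX₄c0 _ (Fin.succ_ne_zero i)]
        | succ j => rw [bd_succ_succ]; rfl
    rw [← this]
    exact meq4
  · intro i j
    exact meq4.dvd (fun i j => dvd_of_le_ordZ hp (hmin i j)) i.succ j.succ

lemma monotone_cons {n : ℕ} {a : ℕ} {r : Fin n → ℕ} (hr : Monotone r) (ha : ∀ i, a ≤ r i) :
    Monotone (Fin.cons a r : Fin (n+1) → ℕ) := by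
  intro i j hij
  induction i using Fin.cases with
  | zero =>
    induction j using Fin.cases with
    | zero => exact le_refl _
    | succ j => simpa using ha j
  | succ i =>
    induction j using Fin.cases with
    | zero =>
      exact absurd (le_antisymm hij (Fin.zero_le _)) (Fin.succ_ne_zero i)
    | succ j =>
      simpa using hr (Fin.succ_le_succ_iff.mp hij)

theorem aux (p k : ℕ) (hp : p.Prime) :
    ∀ n m t, t ≤ k → ∀ X : Matrix (Fin n) (Fin m) (ZMod (p ^ k)),
    (∀ i j, (p : ZMod (p ^ k)) ^ t ∣ X i j) →
    ∃ (Q : Matrix (Fin n) (Fin n) (ZMod (p ^ k)))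
      (S : Matrix (Fin m) (Fin m) (ZMod (p ^ k))) (r : Fin n → ℕ),
      IsUnit Q ∧ IsUnit S ∧ Monotone r ∧ (∀ i, r i ≤ k) ∧ (∀ i, t ≤ r i) ∧
      ∀ i j, (Q * X * S) i j =
        if (i : ℕ) = (j : ℕ) then (p : ZMod (p ^ k)) ^ (r i) else 0 := by
  intro n
  induction n with
  | zero =>
    intro m t ht X hX
    refine ⟨1, 1, Fin.elim0, isUnit_one, isUnit_one, ?_, ?_, ?_, ?_⟩
    · intro i
      exact i.elim0
    · intro i
      exact i.elim0
    · intro i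
      exact i.elim0
    · intro i
      exact i.elim0
  | succ n ih =>
    intro m t ht X hX
    match m with
    | 0 =>
      refine ⟨1, 1, fun _ => t, isUnit_one, isUnit_one, monotone_const, fun _ => ht,
        fun _ => le_refl t, fun i j => j.elim0⟩
    | m + 1 =>
      obtain ⟨q, _, hq⟩ := Finset.exists_min_image Finset.univ
        (fun q : Fin (n+1) × Fin (m+1) => ordZ p k (X q.1 q.2)) ⟨⟨0, 0⟩, Finset.mem_univ _⟩
      set a := ordZ p k (X q.1 q.2) with ha
      have hmin : ∀ i j, a ≤ ordZ p k (X i j) := fun i j => hq ⟨i, j⟩ (Finset.mem_univ _)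
      have hak : a ≤ k := ordZ_le hp _
      have hta : t ≤ a := le_ordZ hp ht (hX q.1 q.2)
      obtain ⟨Y, meq, hdY⟩ := step hp X q.1 q.2 hmin rfl
      obtain ⟨Q', S', r', hQ', hS', hmono', hrk', har', hent⟩ := ih m a hak Y hdY
      set Z : Matrix (Fin n) (Fin m) (ZMod (p ^ k)) :=
        Matrix.of (fun (i : Fin n) (j : Fin m) =>
          if (i : ℕ) = (j : ℕ) then (p : ZMod (p ^ k)) ^ (r' i) else 0) with hZ
      have hQYS : Q' * Y * S' = Z := by
        ext i j
        exact hent i j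
      have meq2 : MEq (bd ((p : ZMod (p ^ k)) ^ a) Y) (bd ((p : ZMod (p ^ k)) ^ a) Z) :=
        MEq.bd_congr _ ⟨Q', S', hQ', hS', hQYS⟩
      obtain ⟨Q, S, hQ, hS, hQXS⟩ := meq.trans meq2
      refine ⟨Q, S, Fin.cons a r', hQ, hS, monotone_cons hmono' har', ?_, ?_, ?_⟩
      · intro i
        induction i using Fin.cases with
        | zero => simpa using hak
        | succ i => simpa using hrk' i
      · intro i
        induction i using Fin.cases with
        | zero => simpa using hta
        | succ i => simpa using le_trans hta (har' i)
      · intro i j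
        rw [hQXS]
        induction i using Fin.cases with
        | zero =>
          induction j using Fin.cases with
          | zero => simp
          | succ j => simp [Fin.val_succ]
        | succ i =>
          induction j using Fin.cases with
          | zero => simp [Fin.val_succ]
          | succ j => simp [Fin.val_succ, hZ]

end Step

end SNF



/-- Smith-type normal form over `ZMod (p^k)`: every `n × m` matrix `X` can be
transformed by invertible matrices `Q`, `S` into a matrix whose `(i,j)` entry is
`δ_{i,j} · p^{r i}` with `0 ≤ r 1 ≤ ⋯ ≤ r n ≤ k`. -/
theorem stmt0 (p : ℕ) (hp : p.Prime) (k : ℕ) (hk : 1 ≤ k) (n m : ℕ)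
    (X : Matrix (Fin n) (Fin m) (ZMod (p ^ k))) :
    ∃ (Q : Matrix (Fin n) (Fin n) (ZMod (p ^ k)))
      (S : Matrix (Fin m) (Fin m) (ZMod (p ^ k))) (r : Fin n → ℕ),
      IsUnit Q ∧ IsUnit S ∧ Monotone r ∧ (∀ i, r i ≤ k) ∧
      ∀ i j, (Q * X * S) i j =
        if (i : ℕ) = (j : ℕ) then (p : ZMod (p ^ k)) ^ (r i) else 0 := by
  obtain ⟨Q, S, r, hQ, hS, hmono, hrk, _, hent⟩ :=
    SNF.aux p k hp n m 0 (Nat.zero_le k) X (by simp)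
  exact ⟨Q, S, r, hQ, hS, hmono, hrk, hent⟩
end

section
/- Every subgroup C of (Z/p^k Z)^m is the row space of a matrix of the form PQω, where P is an l × m matrix (l ≤ m) with P_{i,j} = δ_{i,j}·p^{r_i} for some 0 ≤ r_1 ≤ ⋯ ≤ r_l < k, Q is an invertible upper-triangular m × m matrix with all diagonal entries equal to 1, and ω is an m × m permutation matrix. -/
theorem zmod_unit_decomp (p : ℕ) (hp : p.Prime) (k : ℕ) (x : ZMod (p^k)) (hx : x ≠ 0) :
    ∃ s < k, ∃ u : ZMod (p^k), IsUnit u ∧ x = (p : ZMod (p^k))^s * u := by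
  haveI : NeZero (p^k) := ⟨pow_ne_zero _ hp.pos.ne'⟩
  have hval : x.val ≠ 0 := fun h => hx ((ZMod.val_eq_zero x).mp h)
  set n := x.val with hn
  set s := n.factorization p with hs
  have hd : p ^ s ∣ n := Nat.ordProj_dvd n p
  have hnd : ¬ p ∣ n / p ^ s := Nat.not_dvd_ordCompl hp hval
  have heq : p ^ s * (n / p ^ s) = n := Nat.ordProj_mul_ordCompl_eq_self n p
  have hsk : s < k := by
    have h1 : p ^ s ≤ n := Nat.le_of_dvd (Nat.pos_of_ne_zero hval) hd
    have h2 : n < p ^ k := ZMod.val_lt x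
    exact (pow_lt_pow_iff_right₀ hp.one_lt).mp (lt_of_le_of_lt h1 h2)
  refine ⟨s, hsk, ((n / p ^ s : ℕ) : ZMod (p^k)), ?_, ?_⟩
  · rw [ZMod.isUnit_iff_coprime]
    exact Nat.Coprime.pow_right _ ((hp.coprime_iff_not_dvd.mpr hnd).symm)
  · have := congrArg (fun t : ℕ => (t : ZMod (p^k))) heq
    push_cast at this
    rw [this, hn, ZMod.natCast_val, ZMod.cast_id]

theorem not_pow_succ_dvd (p : ℕ) (hp : p.Prime) (k : ℕ) (a : ℕ) (ha : a < k)
    (u : ZMod (p^k)) (hu : IsUnit u) :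
    ¬ (p : ZMod (p^k))^(a+1) ∣ (p : ZMod (p^k))^a * u := by
  haveI : NeZero (p^k) := ⟨pow_ne_zero _ hp.pos.ne'⟩
  rintro ⟨c, hc⟩
  have h1 : (p : ZMod (p^k))^a = (p:ZMod (p^k))^(a+1) * (c * (hu.unit⁻¹ : (ZMod (p^k))ˣ)) := by
    have := congrArg (· * ((hu.unit⁻¹ : (ZMod (p^k))ˣ) : ZMod (p^k))) hc
    simp only [mul_assoc, hu.mul_val_inv, mul_one] at this
    exact this
  have h2 := congrArg (· * (p : ZMod (p^k))^(k-1-a)) h1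
  have hka : a + (k-1-a) = k-1 := by omega
  have hka2 : (a+1) + (k-1-a) = k := by omega
  rw [mul_right_comm, ← pow_add, ← pow_add, hka, hka2] at h2
  have hzero : (p : ZMod (p^k))^k = 0 := by
    rw [← Nat.cast_pow, ZMod.natCast_self]
  rw [hzero, zero_mul] at h2
  have : ((p^(k-1) : ℕ) : ZMod (p^k)) ≠ 0 := by
    rw [Ne, ZMod.natCast_eq_zero_iff]
    exact fun h => absurd (Nat.pow_dvd_pow_iff_le_right hp.one_lt |>.mp h) (by omega)
  rw [Nat.cast_pow] at this
  exact this h2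

theorem smul_mem_pi {n : ℕ} [NeZero n] {ι : Type*} (C : AddSubgroup (ι → ZMod n))
    {x : ι → ZMod n} (hx : x ∈ C) (c : ZMod n) : (fun j => c * x j) ∈ C := by
  have : (fun j => c * x j) = c.val • x := by
    funext j
    show c * x j = (c.val : ℕ) • x j
    rw [nsmul_eq_mul, ZMod.natCast_val, ZMod.cast_id]
  rw [this]
  exact AddSubgroup.nsmul_mem C hx c.val


theorem key_lemma (p : ℕ) (hp : p.Prime) (k : ℕ) (hk : 1 ≤ k) :
    ∀ (m s : ℕ) (C : AddSubgroup (Fin m → ZMod (p^k))),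
      (∀ x ∈ C, ∀ j, (p : ZMod (p^k))^s ∣ x j) →
      ∃ l, ∃ _ : l ≤ m, ∃ (r : Fin l → ℕ) (w : Fin l → Fin m → ZMod (p^k))
        (pivot : Fin l → Fin m),
        Monotone r ∧ (∀ i, s ≤ r i) ∧ (∀ i, r i < k) ∧
        Function.Injective pivot ∧
        (∀ i i' : Fin l, i' < i → w i (pivot i') = 0) ∧
        (∀ i, w i (pivot i) = 1) ∧
        C = AddSubgroup.closure (Set.range fun i => fun j => (p : ZMod (p^k))^(r i) * w i j) := by
  haveI : NeZero (p^k) := ⟨pow_ne_zero _ hp.pos.ne'⟩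
  classical
  have triv : ∀ (m s : ℕ) (C : AddSubgroup (Fin m → ZMod (p^k))),
      (∀ x ∈ C, x = 0) →
      ∃ l, ∃ _ : l ≤ m, ∃ (r : Fin l → ℕ) (w : Fin l → Fin m → ZMod (p^k))
        (pivot : Fin l → Fin m),
        Monotone r ∧ (∀ i, s ≤ r i) ∧ (∀ i, r i < k) ∧
        Function.Injective pivot ∧
        (∀ i i' : Fin l, i' < i → w i (pivot i') = 0) ∧
        (∀ i, w i (pivot i) = 1) ∧
        C = AddSubgroup.closure (Set.range fun i => fun j => (p : ZMod (p^k))^(r i) * w i j) := by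
    intro m s C hC
    refine ⟨0, Nat.zero_le m, Fin.elim0, Fin.elim0, Fin.elim0,
      fun a => a.elim0, fun a => a.elim0, fun a => a.elim0,
      fun a => a.elim0, fun a => a.elim0, fun a => a.elim0, ?_⟩
    rw [Set.range_eq_empty, AddSubgroup.closure_empty]
    exact (AddSubgroup.eq_bot_iff_forall C).mpr hC
  intro m
  induction m with
  | zero =>
    intro s C hdiv
    exact triv 0 s C (fun x _ => funext fun j => j.elim0)
  | succ m ih =>
    intro s C hdiv
    by_cases hC : ∀ x ∈ C, x = 0
    · exact triv (m+1) s C hC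
    push_neg at hC
    obtain ⟨x, hxC, hxne⟩ := hC
    have hxj : ∃ j, x j ≠ 0 := by
      by_contra h; push_neg at h; exact hxne (funext h)
    obtain ⟨j1, hj1⟩ := hxj
    have hPex : ∃ t, t < k ∧ ∃ y, y ∈ C ∧ ∃ j u, IsUnit u ∧ y j = (p : ZMod (p^k))^t * u := by
      obtain ⟨t, htk, u, hu, hxu⟩ := zmod_unit_decomp p hp k (x j1) hj1
      exact ⟨t, htk, x, hxC, j1, u, hu, hxu⟩
    set r1 := Nat.find hPex with hr1def
    obtain ⟨hr1k, y, hyC, j0, u, hu, hyj0⟩ := Nat.find_spec hPex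
    rw [← hr1def] at hyj0 hr1k
    have hdvd1 : ∀ z ∈ C, ∀ j, (p : ZMod (p^k))^r1 ∣ z j := by
      intro z hz j
      by_cases hzj : z j = 0
      · rw [hzj]; exact dvd_zero _
      obtain ⟨t, htk, u', hu', hzu⟩ := zmod_unit_decomp p hp k (z j) hzj
      have ht : ¬ t < r1 := fun hlt =>
        Nat.find_min hPex hlt ⟨htk, z, hz, j, u', hu', hzu⟩
      rw [hzu]
      exact Dvd.dvd.mul_right (pow_dvd_pow _ (not_lt.mp ht)) u'
    have hsr1 : s ≤ r1 := by
      by_contra hlt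
      push_neg at hlt
      have h1 : (p : ZMod (p^k))^(r1+1) ∣ y j0 :=
        dvd_trans (pow_dvd_pow _ (by omega)) (hdiv y hyC j0)
      rw [hyj0] at h1
      exact not_pow_succ_dvd p hp k r1 hr1k u hu h1
    set xt : Fin (m+1) → ZMod (p^k) := fun j => ((hu.unit⁻¹ : (ZMod (p^k))ˣ) : ZMod (p^k)) * y j
      with hxtdef
    have hxtC : xt ∈ C := smul_mem_pi C hyC _
    have hxtj0 : xt j0 = (p : ZMod (p^k))^r1 := by
      show ((hu.unit⁻¹ : (ZMod (p^k))ˣ) : ZMod (p^k)) * y j0 = _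
      rw [hyj0, mul_comm ((p:ZMod (p^k))^r1) u, ← mul_assoc, hu.val_inv_mul, one_mul]
    have hxtdvd : ∀ j, ∃ c, xt j = (p : ZMod (p^k))^r1 * c := fun j => (hdvd1 xt hxtC j)
    set w0 : Fin (m+1) → ZMod (p^k) :=
      fun j => if j = j0 then 1 else Classical.choose (hxtdvd j) with hw0def
    have hw0 : ∀ j, (p : ZMod (p^k))^r1 * w0 j = xt j := by
      intro j
      by_cases hj : j = j0
      · subst hj
        have : w0 j = 1 := if_pos rfl
        rw [this, mul_one, hxtj0]
      · have : w0 j = Classical.choose (hxtdvd j) := if_neg hj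
        rw [this]
        exact (Classical.choose_spec (hxtdvd j)).symm
    have hw0j0 : w0 j0 = 1 := if_pos rfl
    set ev : (Fin (m+1) → ZMod (p^k)) →+ ZMod (p^k) :=
      Pi.evalAddMonoidHom (fun _ => ZMod (p^k)) j0 with hevdef
    set C0 : AddSubgroup (Fin (m+1) → ZMod (p^k)) := C ⊓ ev.ker with hC0def
    set φ : (Fin (m+1) → ZMod (p^k)) →+ (Fin m → ZMod (p^k)) :=
      { toFun := fun y i => y (j0.succAbove i)
        map_zero' := rfl
        map_add' := fun _ _ => rfl } with hφdef
    set ψ : (Fin m → ZMod (p^k)) →+ (Fin (m+1) → ZMod (p^k)) :=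
      { toFun := fun z => Fin.insertNth j0 0 z
        map_zero' := by
          funext j
          refine Fin.succAboveCases j0 ?_ ?_ j <;>
            simp [Fin.insertNth_apply_same, Fin.insertNth_apply_succAbove]
        map_add' := by
          intro a b
          funext j
          refine Fin.succAboveCases j0 ?_ ?_ j <;>
            simp [Fin.insertNth_apply_same, Fin.insertNth_apply_succAbove] } with hψdef
    set C' : AddSubgroup (Fin m → ZMod (p^k)) := C0.map φ with hC'def
    have hmem0 : ∀ y', y' ∈ C0 ↔ (y' ∈ C ∧ y' j0 = 0) := by
      intro y'
      rw [hC0def, AddSubgroup.mem_inf, AddMonoidHom.mem_ker]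
      rfl
    have hC'div : ∀ z ∈ C', ∀ i, (p : ZMod (p^k))^r1 ∣ z i := by
      rintro z ⟨y', hy', rfl⟩ i
      exact hdvd1 y' ((hmem0 y').mp hy').1 _
    obtain ⟨l', hl', r', w', pivot', hmono', hge', hlt', hinj', hzero', hone', hCeq'⟩ :=
      ih r1 C' hC'div
    have hψapp : ∀ z, ψ z = Fin.insertNth j0 0 z := fun _ => rfl
    have hφapp : ∀ z i, φ z i = z (j0.succAbove i) := fun _ _ => rfl
    have hψφ : ∀ z : Fin (m+1) → ZMod (p^k), z j0 = 0 → ψ (φ z) = z := by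
      intro z hz
      funext j
      rw [hψapp]
      refine Fin.succAboveCases j0 ?_ ?_ j
      · simp only [Fin.insertNth_apply_same, hz]
      · intro i
        simp only [Fin.insertNth_apply_succAbove, hφapp]
    set rr : Fin (l'+1) → ℕ := Fin.cons r1 r' with hrrdef
    set W : Fin (l'+1) → Fin (m+1) → ZMod (p^k) :=
      Fin.cons w0 (fun i => Fin.insertNth j0 0 (w' i)) with hWdef
    set piv : Fin (l'+1) → Fin (m+1) :=
      Fin.cons j0 (fun i => j0.succAbove (pivot' i)) with hpivdef
    have hv0 : (fun j => (p : ZMod (p^k))^(rr 0) * W 0 j) = xt := by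
      funext j
      rw [hrrdef, hWdef]
      simp only [Fin.cons_zero]
      exact hw0 j
    have hvs : ∀ i : Fin l',
        (fun j => (p : ZMod (p^k))^(rr i.succ) * W i.succ j) =
          ψ (fun j => (p : ZMod (p^k))^(r' i) * w' i j) := by
      intro i
      funext j
      rw [hrrdef, hWdef, hψapp]
      simp only [Fin.cons_succ]
      refine Fin.succAboveCases j0 ?_ ?_ j
      · simp only [Fin.insertNth_apply_same, mul_zero]
      · intro i'
        simp only [Fin.insertNth_apply_succAbove]
    refine ⟨l'+1, by omega, rr, W, piv, ?_, ?_, ?_, ?_, ?_, ?_, ?_⟩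
    · -- Monotone
      have hge : ∀ a : Fin (l'+1), r1 ≤ rr a := by
        intro a
        rcases Fin.eq_zero_or_eq_succ a with rfl | ⟨a', rfl⟩
        · rw [hrrdef, Fin.cons_zero]
        · rw [hrrdef, Fin.cons_succ]; exact hge' a'
      intro a b hab
      rcases Fin.eq_zero_or_eq_succ a with rfl | ⟨a', rfl⟩
      · rw [hrrdef]; rw [Fin.cons_zero]; exact hge b
      rcases Fin.eq_zero_or_eq_succ b with rfl | ⟨b', rfl⟩
      · exact absurd (Fin.le_zero_iff.mp hab) (Fin.succ_ne_zero a')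
      · rw [hrrdef, Fin.cons_succ, Fin.cons_succ]
        exact hmono' (Fin.succ_le_succ_iff.mp hab)
    · intro i
      rcases Fin.eq_zero_or_eq_succ i with rfl | ⟨i', rfl⟩
      · rw [hrrdef, Fin.cons_zero]; exact hsr1
      · rw [hrrdef, Fin.cons_succ]; exact le_trans hsr1 (hge' i')
    · intro i
      rcases Fin.eq_zero_or_eq_succ i with rfl | ⟨i', rfl⟩
      · rw [hrrdef, Fin.cons_zero]; exact hr1k
      · rw [hrrdef, Fin.cons_succ]; exact hlt' i'
    · -- injective pivot
      intro a b hab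
      rcases Fin.eq_zero_or_eq_succ a with rfl | ⟨a', rfl⟩ <;>
        rcases Fin.eq_zero_or_eq_succ b with rfl | ⟨b', rfl⟩
      · rfl
      · rw [hpivdef, Fin.cons_zero, Fin.cons_succ] at hab
        exact absurd hab.symm (Fin.succAbove_ne j0 (pivot' b'))
      · rw [hpivdef, Fin.cons_zero, Fin.cons_succ] at hab
        exact absurd hab (Fin.succAbove_ne j0 (pivot' a'))
      · rw [hpivdef, Fin.cons_succ, Fin.cons_succ] at hab
        exact congrArg Fin.succ (hinj' (Fin.succAbove_right_injective hab))
    · -- zeros below pivots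
      intro i i' hlt
      rcases Fin.eq_zero_or_eq_succ i with rfl | ⟨i1, rfl⟩
      · exact absurd hlt (Fin.not_lt_zero i')
      rcases Fin.eq_zero_or_eq_succ i' with rfl | ⟨i2, rfl⟩
      · rw [hWdef, hpivdef]
        simp only [Fin.cons_succ, Fin.cons_zero, Fin.insertNth_apply_same]
      · rw [hWdef, hpivdef, Fin.cons_succ, Fin.cons_succ,
          Fin.insertNth_apply_succAbove]
        exact hzero' i1 i2 (Fin.succ_lt_succ_iff.mp hlt)
    · -- ones at pivots
      intro i
      rcases Fin.eq_zero_or_eq_succ i with rfl | ⟨i', rfl⟩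
      · rw [hWdef, hpivdef, Fin.cons_zero, Fin.cons_zero]; exact hw0j0
      · rw [hWdef, hpivdef, Fin.cons_succ, Fin.cons_succ,
          Fin.insertNth_apply_succAbove]
        exact hone' i'
    · -- C = closure
      have hsub : ∀ i : Fin (l'+1), (fun j => (p : ZMod (p^k))^(rr i) * W i j) ∈ C := by
        intro i
        rcases Fin.eq_zero_or_eq_succ i with rfl | ⟨i', rfl⟩
        · rw [hv0]; exact hxtC
        · rw [hvs i']
          have hmem : (fun j => (p : ZMod (p^k))^(r' i') * w' i' j) ∈ C' := by
            rw [hCeq']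
            exact AddSubgroup.subset_closure ⟨i', rfl⟩
          obtain ⟨y', hy', heq⟩ := hmem
          rw [← heq, hψφ y' ((hmem0 y').mp hy').2]
          exact ((hmem0 y').mp hy').1
      apply le_antisymm
      · -- C ≤ closure
        intro z hz
        obtain ⟨c, hc⟩ := hdvd1 z hz j0
        set z0 : Fin (m+1) → ZMod (p^k) := z - (fun j => c * xt j) with hz0def
        have hz0C : z0 ∈ C := AddSubgroup.sub_mem C hz (smul_mem_pi C hxtC c)
        have hz0j0 : z0 j0 = 0 := by
          show z j0 - c * xt j0 = 0
          rw [hc, hxtj0, mul_comm c, sub_self]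
        have hz0mem : z0 ∈ C0 := (hmem0 z0).mpr ⟨hz0C, hz0j0⟩
        have hφz0 : φ z0 ∈ AddSubgroup.closure
            (Set.range fun i => fun j => (p : ZMod (p^k))^(r' i) * w' i j) := by
          rw [← hCeq']
          exact ⟨z0, hz0mem, rfl⟩
        have h1 : ψ (φ z0) ∈ AddSubgroup.map ψ (AddSubgroup.closure
            (Set.range fun i => fun j => (p : ZMod (p^k))^(r' i) * w' i j)) :=
          AddSubgroup.mem_map_of_mem _ hφz0
        rw [AddMonoidHom.map_closure] at h1
        have himg : (⇑ψ '' Set.range fun i => fun j => (p : ZMod (p^k))^(r' i) * w' i j) ⊆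
            Set.range fun i => fun j => (p : ZMod (p^k))^(rr i) * W i j := by
          rintro _ ⟨_, ⟨i, rfl⟩, rfl⟩
          exact ⟨i.succ, hvs i⟩
        have h2 : ψ (φ z0) ∈ AddSubgroup.closure
            (Set.range fun i => fun j => (p : ZMod (p^k))^(rr i) * W i j) :=
          AddSubgroup.closure_mono himg h1
        rw [hψφ z0 hz0j0] at h2
        have h3 : (fun j => c * xt j) ∈ AddSubgroup.closure
            (Set.range fun i => fun j => (p : ZMod (p^k))^(rr i) * W i j) := by
          have hv0mem : (fun j => (p : ZMod (p^k))^(rr 0) * W 0 j) ∈ AddSubgroup.closure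
              (Set.range fun i => fun j => (p : ZMod (p^k))^(rr i) * W i j) :=
            AddSubgroup.subset_closure ⟨0, rfl⟩
          rw [hv0] at hv0mem
          exact smul_mem_pi _ hv0mem c
        have hzeq : z = (fun j => c * xt j) + z0 := by
          funext j
          show z j = c * xt j + (z j - c * xt j)
          ring
        rw [hzeq]
        exact AddSubgroup.add_mem _ h3 h2
      · -- closure ≤ C
        rw [AddSubgroup.closure_le]
        rintro _ ⟨i, rfl⟩
        exact hsub i
theorem exists_perm_comp {l m : ℕ} (f g : Fin l → Fin m)
    (hf : Function.Injective f) (hg : Function.Injective g) :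
    ∃ σ : Equiv.Perm (Fin m), ∀ i, σ (f i) = g i := by
  classical
  have hcard : Fintype.card ((Set.range f)ᶜ : Set (Fin m)) =
      Fintype.card ((Set.range g)ᶜ : Set (Fin m)) := by
    rw [Fintype.card_compl_set, Fintype.card_compl_set,
      Set.card_range_of_injective hf, Set.card_range_of_injective hg]
  let e1 : (Set.range f : Set (Fin m)) ≃ (Set.range g : Set (Fin m)) :=
    (Equiv.ofInjective f hf).symm.trans (Equiv.ofInjective g hg)
  let e2 : ((Set.range f)ᶜ : Set (Fin m)) ≃ ((Set.range g)ᶜ : Set (Fin m)) :=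
    Fintype.equivOfCardEq hcard
  refine ⟨(Equiv.Set.sumCompl (Set.range f)).symm.trans
    ((Equiv.sumCongr e1 e2).trans (Equiv.Set.sumCompl (Set.range g))), fun i => ?_⟩
  simp only [Equiv.trans_apply]
  rw [Equiv.Set.sumCompl_symm_apply_of_mem (Set.mem_range_self i)]
  simp only [Equiv.sumCongr_apply, Sum.map_inl, Equiv.Set.sumCompl_apply_inl]
  have : e1 ⟨f i, Set.mem_range_self i⟩ = ⟨g i, Set.mem_range_self i⟩ := by
    simp only [e1, Equiv.trans_apply]
    have h1 : (Equiv.ofInjective f hf).symm ⟨f i, Set.mem_range_self i⟩ = i := by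
      apply (Equiv.ofInjective f hf).injective
      simp [Equiv.apply_ofInjective_symm]
    rw [h1]
    rfl
  rw [this]

/-- The subgroup of `R^m` generated by the rows of a matrix `X`. -/
def rowSpace {R : Type*} [CommRing R] {l m : ℕ} (X : Matrix (Fin l) (Fin m) R) :
    AddSubgroup (Fin m → R) :=
  AddSubgroup.closure (Set.range fun i => X i)

/-- The permutation matrix of `τ`, with `(i,j)` entry `δ_{i, τ j}`. -/
def permMat {R : Type*} [CommRing R] {m : ℕ} (τ : Equiv.Perm (Fin m)) :
    Matrix (Fin m) (Fin m) R :=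
  fun i j => if i = τ j then 1 else 0

/-- Every subgroup `C` of `(ZMod (p^k))^m` is the row space of a matrix `P * Q * ω` with
`P i j = δ_{i,j} p^{r i}` (`0 ≤ r 1 ≤ ⋯ ≤ r l < k`, `l ≤ m`), `Q` invertible upper-triangular
with diagonal `1`'s, and `ω` a permutation matrix. -/
theorem stmt3 (p : ℕ) (hp : p.Prime) (k : ℕ) (hk : 1 ≤ k) (m : ℕ)
    (C : AddSubgroup (Fin m → ZMod (p ^ k))) :
    ∃ (l : ℕ) (_ : l ≤ m) (r : Fin l → ℕ) (P : Matrix (Fin l) (Fin m) (ZMod (p ^ k)))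
      (Q : Matrix (Fin m) (Fin m) (ZMod (p ^ k))) (τ : Equiv.Perm (Fin m)),
      Monotone r ∧ (∀ i, r i < k) ∧
      (∀ i j, P i j = if (i : ℕ) = (j : ℕ) then (p : ZMod (p ^ k)) ^ (r i) else 0) ∧
      IsUnit Q ∧ (∀ i j : Fin m, j < i → Q i j = 0) ∧ (∀ i, Q i i = 1) ∧
      C = rowSpace (P * Q * permMat τ) := by
  classical
  obtain ⟨l, hl, r, w, pivot, hmono, -, hltk, hinj, hzero, hone, hCeq⟩ :=
    key_lemma p hp k hk m 0 C (fun x _ j => by simpa using one_dvd (x j))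
  obtain ⟨τ, hτ⟩ := exists_perm_comp pivot (Fin.castLE hl) hinj (Fin.castLE_injective hl)
  have hτsymm : ∀ i, τ.symm (Fin.castLE hl i) = pivot i := fun i => by
    rw [← hτ i, Equiv.symm_apply_apply]
  set Q : Matrix (Fin m) (Fin m) (ZMod (p^k)) :=
    fun a b => if h : (a : ℕ) < l then w ⟨a, h⟩ (τ.symm b) else if a = b then 1 else 0
    with hQdef
  set P : Matrix (Fin l) (Fin m) (ZMod (p^k)) :=
    fun i j => if (i : ℕ) = (j : ℕ) then (p : ZMod (p^k))^(r i) else 0 with hPdef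
  have hQtri : ∀ a b : Fin m, b < a → Q a b = 0 := by
    intro a b hba
    simp only [hQdef]
    by_cases h : (a : ℕ) < l
    · rw [dif_pos h]
      have hbl : (b : ℕ) < l := lt_trans hba h
      have h2 : τ.symm b = pivot ⟨(b : ℕ), hbl⟩ := hτsymm ⟨(b : ℕ), hbl⟩
      rw [h2]
      exact hzero ⟨a, h⟩ ⟨b, hbl⟩ hba
    · rw [dif_neg h, if_neg (ne_of_gt hba)]
  have hQdiag : ∀ a, Q a a = 1 := by
    intro a
    simp only [hQdef]
    by_cases h : (a : ℕ) < l
    · rw [dif_pos h]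
      have h2 : τ.symm a = pivot ⟨(a : ℕ), h⟩ := hτsymm ⟨(a : ℕ), h⟩
      rw [h2]
      exact hone ⟨a, h⟩
    · rw [dif_neg h]
      simp
  have hQunit : IsUnit Q := by
    rw [Matrix.isUnit_iff_isUnit_det]
    have hdet : Q.det = ∏ a, Q a a :=
      Matrix.det_of_upperTriangular (fun i j h => hQtri i j h)
    rw [hdet]
    simp only [hQdiag]
    simp
  have hrow : ∀ (i : Fin l) (j : Fin m),
      (P * Q * (permMat τ : Matrix (Fin m) (Fin m) (ZMod (p^k))) : Matrix (Fin l) (Fin m) (ZMod (p^k))) i j = (p : ZMod (p^k))^(r i) * w i j := by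
    intro i j
    rw [Matrix.mul_apply]
    have hstep1 : ∀ a : Fin m, (P * Q : Matrix (Fin l) (Fin m) (ZMod (p^k))) i a * permMat τ a j =
        if a = τ j then (P * Q : Matrix (Fin l) (Fin m) (ZMod (p^k))) i a else 0 := by
      intro a
      unfold permMat
      rw [mul_ite, mul_one, mul_zero]
    simp only [hstep1]
    rw [Finset.sum_ite_eq' Finset.univ (τ j)
      (fun a => (P * Q : Matrix (Fin l) (Fin m) (ZMod (p^k))) i a),
      if_pos (Finset.mem_univ _)]
    rw [Matrix.mul_apply]
    rw [Finset.sum_eq_single (Fin.castLE hl i)]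
    · simp only [hPdef]
      have : ((i : ℕ) = ((Fin.castLE hl i : Fin m) : ℕ)) := rfl
      rw [if_pos this]; simp only [hQdef]
      have hil : ((Fin.castLE hl i : Fin m) : ℕ) < l := i.isLt
      rw [dif_pos hil]
      have h3 : (⟨((Fin.castLE hl i : Fin m) : ℕ), hil⟩ : Fin l) = i := by apply Fin.ext; rfl
      rw [h3, Equiv.symm_apply_apply]
    · intro b _ hb
      simp only [hPdef]
      have : ¬ ((i : ℕ) = (b : ℕ)) := by
        intro h
        exact hb (Fin.ext h.symm)
      rw [if_neg this, zero_mul]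
    · intro h
      exact absurd (Finset.mem_univ _) h
  refine ⟨l, hl, r, P, Q, τ, hmono, hltk, fun i j => rfl, hQunit, hQtri, hQdiag, ?_⟩
  rw [hCeq]
  unfold rowSpace
  congr 1
  exact congrArg Set.range (funext fun i => funext fun j => (hrow i j).symm)
end

section
/- Let R = Z/p^k Z and let P be the l × m matrix over R with P_{i,j} = δ_{i,j}·p^{r_i}, 0 ≤ r_1 ≤ ⋯ ≤ r_l < k; extend r_i = k for l < i ≤ m. For invertible m × m matrices M, M' over R, the row spaces ⟨PM⟩ and ⟨PM'⟩ are equal if and only if for all j > i, the p-degree of the (i,j)-entry of MM'^{-1} is at least r_j − r_i. -/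
/-- The `p`-degree of an element of `ZMod (p^k)`: the unique `r` with `x = p^r · χ`,
`χ` a unit (and `r = k` for `x = 0`). -/
noncomputable def pDeg (p k : ℕ) (x : ZMod (p ^ k)) : ℕ :=
  sInf {r : ℕ | ∃ χ : ZMod (p ^ k), IsUnit χ ∧ x = (p : ZMod (p ^ k)) ^ r * χ}

section Arith

variable {p k : ℕ}

lemma pk_one_lt (hp : p.Prime) (hk : 1 ≤ k) : 1 < p ^ k :=
  Nat.one_lt_pow (by omega) hp.one_lt

lemma dvd_val_iff (hp : p.Prime) {s : ℕ} (hs : s ≤ k) (x : ZMod (p ^ k)) :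
    (p : ZMod (p ^ k)) ^ s ∣ x ↔ p ^ s ∣ x.val := by
  haveI : NeZero (p ^ k) := ⟨pow_ne_zero _ hp.ne_zero⟩
  constructor
  · rintro ⟨y, rfl⟩
    have h1 : ((p : ZMod (p ^ k)) ^ s * y) = ((p ^ s * y.val : ℕ) : ZMod (p ^ k)) := by
      push_cast [ZMod.natCast_val, ZMod.cast_id]
      ring
    rw [h1, ZMod.val_natCast]
    exact (Nat.dvd_mod_iff (pow_dvd_pow p hs)).mpr ⟨y.val, rfl⟩
  · rintro ⟨t, ht⟩
    have h1 : x = ((x.val : ℕ) : ZMod (p ^ k)) := by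
      rw [ZMod.natCast_val, ZMod.cast_id]
    rw [h1, ht]
    push_cast
    exact ⟨(t : ZMod (p ^ k)), rfl⟩

/-- cancellation: if p^a ∣ p^b * x with b ≤ a ≤ k, then p^(a-b) ∣ x. -/
lemma cancel_dvd (hp : p.Prime) {a b : ℕ} (ha : a ≤ k) (hba : b ≤ a) (x : ZMod (p ^ k))
    (h : (p : ZMod (p ^ k)) ^ a ∣ (p : ZMod (p ^ k)) ^ b * x) :
    (p : ZMod (p ^ k)) ^ (a - b) ∣ x := by
  rw [dvd_val_iff hp ha] at h
  rw [dvd_val_iff hp (le_trans (Nat.sub_le a b) ha)]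
  -- h : p ^ a ∣ ((p:ZMod _)^b * x).val
  have hb : b ≤ k := le_trans hba ha
  have h2 : ((p : ZMod (p ^ k)) ^ b * x) = ((p ^ b * x.val : ℕ) : ZMod (p ^ k)) := by
    haveI : NeZero (p ^ k) := ⟨pow_ne_zero _ hp.ne_zero⟩
    push_cast [ZMod.natCast_val, ZMod.cast_id]
    ring
  rw [h2, ZMod.val_natCast] at h
  have h3 : p ^ a ∣ p ^ b * x.val :=
    (Nat.dvd_mod_iff (pow_dvd_pow p ha)).mp h
  obtain ⟨t, ht⟩ := h3
  refine ⟨t, ?_⟩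
  have hpb : 0 < p ^ b := pow_pos hp.pos b
  have : p ^ b * x.val = p ^ b * (p ^ (a - b) * t) := by
    rw [ht, ← mul_assoc, ← pow_add]
    congr 2
    omega
  exact Nat.eq_of_mul_eq_mul_left hpb this

lemma exists_pdeg_rep (hp : p.Prime) (hk : 1 ≤ k) (x : ZMod (p ^ k)) :
    ∃ r, r ≤ k ∧ ∃ χ : ZMod (p ^ k), IsUnit χ ∧ x = (p : ZMod (p ^ k)) ^ r * χ := by
  haveI : NeZero (p ^ k) := ⟨pow_ne_zero _ hp.ne_zero⟩
  by_cases hx : x = 0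
  · exact ⟨k, le_rfl, 1, isUnit_one, by
      simp [hx, show ((p : ZMod (p ^ k)) ^ k) = 0 by
        rw [← Nat.cast_pow, ZMod.natCast_self]]⟩
  · have hv : x.val ≠ 0 := fun h => hx (by
      have := ZMod.natCast_val (R := ZMod (p ^ k)) x
      rw [ZMod.cast_id] at this
      rw [← this, h, Nat.cast_zero])
    set v := x.val.factorization p with hvdef
    have hdvd : p ^ v ∣ x.val := Nat.ordProj_dvd x.val p
    obtain ⟨u, hu⟩ := hdvd
    have hpu : ¬ p ∣ u := by
      intro ⟨w, hw⟩
      have : p ^ (v + 1) ∣ x.val := ⟨w, by rw [hu, hw]; ring⟩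
      exact (Nat.pow_succ_factorization_not_dvd hv hp) this
    have hvk : v ≤ k := by
      by_contra hvk
      have : p ^ k ∣ x.val := dvd_trans (pow_dvd_pow p (by omega)) ⟨u, hu⟩
      have hlt : x.val < p ^ k := ZMod.val_lt x
      have := Nat.le_of_dvd (Nat.pos_of_ne_zero hv) this
      omega
    refine ⟨v, hvk, (u : ZMod (p ^ k)), ?_, ?_⟩
    · rw [ZMod.isUnit_iff_coprime]
      exact Nat.Coprime.pow_right _ (((Nat.Prime.coprime_iff_not_dvd hp).mpr hpu).symm)
    · have h1 : x = ((x.val : ℕ) : ZMod (p ^ k)) := by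
        rw [ZMod.natCast_val, ZMod.cast_id]
      rw [h1, hu]
      push_cast
      ring

lemma p_not_unit (hp : p.Prime) (hk : 1 ≤ k) : ¬ IsUnit (p : ZMod (p ^ k)) := by
  haveI : Fact (1 < p ^ k) := ⟨pk_one_lt hp hk⟩
  intro h
  have h0 : ((p : ZMod (p ^ k)) ^ k) = 0 := by
    rw [← Nat.cast_pow, ZMod.natCast_self]
  have := (h.pow k)
  rw [h0] at this
  exact not_isUnit_zero this

lemma le_pDeg_iff (hp : p.Prime) (hk : 1 ≤ k) {s : ℕ} (hs : s ≤ k) (x : ZMod (p ^ k)) :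
    s ≤ pDeg p k x ↔ (p : ZMod (p ^ k)) ^ s ∣ x := by
  have hne : {r : ℕ | ∃ χ : ZMod (p ^ k), IsUnit χ ∧ x = (p : ZMod (p ^ k)) ^ r * χ}.Nonempty := by
    obtain ⟨v, -, χ, hχ, hx⟩ := exists_pdeg_rep hp hk x
    exact ⟨v, χ, hχ, hx⟩
  constructor
  · intro h
    obtain ⟨χ, hχ, hx⟩ := Nat.sInf_mem hne
    rw [hx]
    exact Dvd.dvd.mul_right (pow_dvd_pow _ h) χ
  · intro h
    refine le_csInf hne ?_
    rintro r ⟨χ, hχ, hx⟩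
    by_contra hrs
    push_neg at hrs
    rw [hx] at h
    have := cancel_dvd hp hs (le_of_lt hrs) χ h
    have hp1 : (p : ZMod (p ^ k)) ∣ χ :=
      dvd_trans (dvd_pow_self _ (by omega : s - r ≠ 0)) this
    exact p_not_unit hp hk (isUnit_of_dvd_unit hp1 hχ)

end Arith

section Rows

variable {R : Type*} [CommRing R] {m : ℕ}

/-- Right multiplication by a matrix, as an additive monoid hom on row vectors. -/
def vmHom (N : Matrix (Fin m) (Fin m) R) : (Fin m → R) →+ (Fin m → R) :=
  AddMonoidHom.mk' (fun v => Matrix.vecMul v N) (fun a b => Matrix.add_vecMul N a b)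

@[simp] lemma vmHom_apply (N : Matrix (Fin m) (Fin m) R) (v : Fin m → R) :
    vmHom N v = Matrix.vecMul v N := rfl

lemma rowSpace_mul {l : ℕ} (X : Matrix (Fin l) (Fin m) R) (N : Matrix (Fin m) (Fin m) R) :
    rowSpace (X * N) = (rowSpace X).map (vmHom N) := by
  unfold rowSpace
  have hrow : (fun i => (X * N) i) = ⇑(vmHom N) ∘ (fun i => X i) := by
    funext i
    ext j
    simp [Matrix.mul_apply, Matrix.vecMul, dotProduct, Function.comp]
  rw [AddMonoidHom.map_closure, ← Set.range_comp, hrow]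

lemma vmHom_injective {N : Matrix (Fin m) (Fin m) R} (hN : IsUnit N) :
    Function.Injective ⇑(vmHom N) := by
  intro v w h
  have hdet := (Matrix.isUnit_iff_isUnit_det N).mp hN
  have h2 := congrArg (fun u => Matrix.vecMul u N⁻¹) h
  simpa [Matrix.vecMul_vecMul, Matrix.mul_nonsing_inv N hdet] using h2

end Rows

/-- The subgroup of vectors whose `j`-th coordinate is divisible by `p ^ rext j`. -/
def degSubgroup (p k m : ℕ) (rext : Fin m → ℕ) : AddSubgroup (Fin m → ZMod (p ^ k)) where
  carrier := {v | ∀ j, (p : ZMod (p ^ k)) ^ rext j ∣ v j}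
  add_mem' := fun ha hb j => dvd_add (ha j) (hb j)
  zero_mem' := fun j => dvd_zero _
  neg_mem' := fun ha j => dvd_neg.mpr (ha j)

lemma mem_degSubgroup {p k m : ℕ} {rext : Fin m → ℕ} {v : Fin m → ZMod (p ^ k)} :
    v ∈ degSubgroup p k m rext ↔ ∀ j, (p : ZMod (p ^ k)) ^ rext j ∣ v j := Iff.rfl


/-- `⟨PM⟩ = ⟨PM'⟩` iff for all `j > i` the `p`-degree of `(M M'⁻¹) i j` is at least
`r j - r i`, where `r` is extended by `r i = k` for `i > l`. -/
theorem stmt4 (p : ℕ) (hp : p.Prime) (k : ℕ) (hk : 1 ≤ k) (l m : ℕ) (hlm : l ≤ m)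
    (r : Fin l → ℕ) (hmono : Monotone r) (hr : ∀ i, r i < k)
    (P : Matrix (Fin l) (Fin m) (ZMod (p ^ k)))
    (hP : ∀ i j, P i j = if (i : ℕ) = (j : ℕ) then (p : ZMod (p ^ k)) ^ (r i) else 0)
    (rext : Fin m → ℕ) (hrext : ∀ j : Fin m, rext j = if h : (j : ℕ) < l then r ⟨j, h⟩ else k)
    (M M' : Matrix (Fin m) (Fin m) (ZMod (p ^ k))) (hM : IsUnit M) (hM' : IsUnit M') :
    rowSpace (P * M) = rowSpace (P * M') ↔
      ∀ i j : Fin m, i < j → rext j - rext i ≤ pDeg p k ((M * M'⁻¹) i j) := by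
  haveI : NeZero (p ^ k) := ⟨pow_ne_zero _ hp.ne_zero⟩
  have hrk : ∀ j : Fin m, rext j ≤ k := by
    intro j; rw [hrext]; split
    · exact le_of_lt (hr _)
    · exact le_rfl
  have hrmono : ∀ i j : Fin m, (i : ℕ) ≤ (j : ℕ) → rext i ≤ rext j := by
    intro i j hij
    rw [hrext i, hrext j]
    by_cases h1 : (i : ℕ) < l
    · rw [dif_pos h1]
      by_cases h2 : (j : ℕ) < l
      · rw [dif_pos h2]; exact hmono (Fin.mk_le_mk.mpr hij)
      · rw [dif_neg h2]; exact le_of_lt (hr _)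
    · rw [dif_neg h1, dif_neg (by omega)]
  have hS : rowSpace P = degSubgroup p k m rext := by
    apply le_antisymm
    · rw [rowSpace, AddSubgroup.closure_le]
      rintro _ ⟨i, rfl⟩
      intro j
      show (p : ZMod (p ^ k)) ^ rext j ∣ P i j
      rw [hP]
      by_cases hij : (i : ℕ) = (j : ℕ)
      · rw [if_pos hij, hrext]
        have hjl : (j : ℕ) < l := hij ▸ i.2
        rw [dif_pos hjl]
        have hh : (⟨(j : ℕ), hjl⟩ : Fin l) = i := Fin.ext hij.symm
        rw [hh]
      · rw [if_neg hij]; exact dvd_zero _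
    · intro v hv
      replace hv : ∀ j, (p : ZMod (p ^ k)) ^ rext j ∣ v j := hv
      have hv0 : ∀ j : Fin m, l ≤ (j : ℕ) → v j = 0 := by
        intro j hj
        have h := hv j
        rw [hrext, dif_neg (by omega),
          show ((p : ZMod (p ^ k)) ^ k) = 0 by rw [← Nat.cast_pow, ZMod.natCast_self],
          zero_dvd_iff] at h
        exact h
      choose c hc using fun i : Fin l => hv (Fin.castLE hlm i)
      have hveq : v = ∑ i : Fin l, (c i).val • P i := by
        funext j
        rw [Finset.sum_apply]
        have hterm : ∀ i : Fin l, ((c i).val • P i) j = c i * P i j := by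
          intro i
          show (c i).val • P i j = _
          rw [nsmul_eq_mul, ZMod.natCast_val, ZMod.cast_id]
        by_cases hjl : (j : ℕ) < l
        · rw [Finset.sum_eq_single ⟨(j : ℕ), hjl⟩]
          · rw [hterm, hP, if_pos rfl]
            have hcc := hc ⟨(j : ℕ), hjl⟩
            rw [show Fin.castLE hlm (⟨(j : ℕ), hjl⟩ : Fin l) = j from Fin.ext rfl] at hcc
            rw [hcc, hrext, dif_pos hjl]
            ring
          · intro i _ hne
            rw [hterm, hP, if_neg, mul_zero]
            intro hcontra
            exact hne (Fin.ext hcontra)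
          · intro habs
            exact absurd (Finset.mem_univ _) habs
        · rw [hv0 j (by omega)]
          symm
          apply Finset.sum_eq_zero
          intro i _
          rw [hterm, hP, if_neg (by have := i.isLt; omega), mul_zero]
      rw [hveq]
      exact AddSubgroup.sum_mem _ fun i _ =>
        AddSubgroup.nsmul_mem _ (AddSubgroup.subset_closure (Set.mem_range_self i)) _
  have hdetM' : IsUnit M'.det := (Matrix.isUnit_iff_isUnit_det M').mp hM'
  set N := M * M'⁻¹ with hNdef
  have hNM' : N * M' = M := by
    rw [hNdef, Matrix.mul_assoc, Matrix.nonsing_inv_mul M' hdetM', Matrix.mul_one]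
  have hNunit : IsUnit N := by
    apply (Matrix.isUnit_iff_isUnit_det N).mpr
    have hdm : N.det * M'.det = M.det := by rw [← Matrix.det_mul, hNM']
    have hMdet : IsUnit M.det := (Matrix.isUnit_iff_isUnit_det M).mp hM
    rw [← hdm] at hMdet
    exact isUnit_of_mul_isUnit_left hMdet
  have key1 : (rowSpace (P * M) = rowSpace (P * M')) ↔ rowSpace (P * N) = rowSpace P := by
    rw [show P * M = P * N * M' by rw [Matrix.mul_assoc, hNM'], rowSpace_mul _ M',
      rowSpace_mul P M']
    exact (AddSubgroup.map_injective (vmHom_injective hM')).eq_iff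
  rw [key1, hS]
  constructor
  · intro heq i j hij
    rcases le_or_gt (rext j) (rext i) with hle | hlt
    · rw [Nat.sub_eq_zero_of_le hle]; exact Nat.zero_le _
    · have hil : (i : ℕ) < l := by
        by_contra hcon
        rw [hrext i, dif_neg hcon] at hlt
        have := hrk j
        omega
      have hri : rext i = r ⟨(i : ℕ), hil⟩ := by rw [hrext, dif_pos hil]
      have hrow : (P * N) ⟨(i : ℕ), hil⟩ ∈ rowSpace (P * N) :=
        AddSubgroup.subset_closure (Set.mem_range_self _)
      rw [heq] at hrow
      have hdvd := mem_degSubgroup.mp hrow j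
      have hentry : (P * N) ⟨(i : ℕ), hil⟩ j
          = (p : ZMod (p ^ k)) ^ (r ⟨(i : ℕ), hil⟩) * N i j := by
        rw [Matrix.mul_apply, Finset.sum_eq_single i]
        · rw [hP, if_pos rfl]
        · intro t _ hne
          rw [hP, if_neg, zero_mul]
          intro hcontra
          exact hne (Fin.ext hcontra.symm)
        · intro habs
          exact absurd (Finset.mem_univ _) habs
      rw [hentry] at hdvd
      have hres := cancel_dvd hp (hrk j) (by omega) (N i j) hdvd
      rw [le_pDeg_iff hp hk (by have := hrk j; omega), hri]
      exact hres
  · intro hcond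
    rw [rowSpace_mul, hS]
    have hsub : (⇑(vmHom N) '' (degSubgroup p k m rext : Set (Fin m → ZMod (p ^ k))))
        ⊆ (degSubgroup p k m rext : Set (Fin m → ZMod (p ^ k))) := by
      rintro _ ⟨v, hv, rfl⟩
      intro j
      show (p : ZMod (p ^ k)) ^ rext j ∣ Matrix.vecMul v N j
      have hvm : Matrix.vecMul v N j = ∑ i, v i * N i j := rfl
      rw [hvm]
      apply Finset.dvd_sum
      intro i _
      rcases lt_or_ge (i : ℕ) (j : ℕ) with hij | hij
      · have h1 := hcond i j (Fin.lt_def.mpr hij)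
        rw [le_pDeg_iff hp hk (by have := hrk j; omega)] at h1
        have h3 := mul_dvd_mul (hv i) h1
        rw [← pow_add] at h3
        have h4 : rext i + (rext j - rext i) = rext j := by
          have := hrmono i j (le_of_lt hij); omega
        rwa [h4] at h3
      · exact dvd_mul_of_dvd_left
          (dvd_trans (pow_dvd_pow _ (hrmono j i hij)) (hv i)) _
    have hcard : (⇑(vmHom N) '' (degSubgroup p k m rext : Set (Fin m → ZMod (p ^ k)))).ncard
        = (degSubgroup p k m rext : Set (Fin m → ZMod (p ^ k))).ncard :=
      Set.ncard_image_of_injective _ (vmHom_injective hNunit)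
    have heqset : ⇑(vmHom N) '' (degSubgroup p k m rext : Set (Fin m → ZMod (p ^ k)))
        = (degSubgroup p k m rext : Set (Fin m → ZMod (p ^ k))) :=
      Set.eq_of_subset_of_ncard_le hsub hcard.ge (Set.toFinite _)
    apply SetLike.ext'
    rw [AddSubgroup.coe_map]
    exact heqset
end

section
/- Let G be a finite abelian group that decomposes as a direct product G = ∏_{p ∈ I} G^{(p)} of its Sylow p-subgroups, and let φ: H → G be a group homomorphism from an abelian group H. Then φ is surjective if and only if the composition q^{(p)} ∘ φ with each projection q^{(p)}: G → G^{(p)} is surjective; moreover, for an automorphism α of H, α(ker φ) = ker φ if and only if α(ker(q^{(p)} ∘ φ)) = ker(q^{(p)} ∘ φ) for all p ∈ I. -/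
/-- Let `G = ∏_{p ∈ I} G^{(p)}` be a finite abelian group decomposed as a product of
its Sylow subgroups (p-groups for distinct primes), and `φ : H → G` a homomorphism from
an abelian group `H`.  Then `φ` is surjective iff each `q^{(p)} ∘ φ` is, and for any
automorphism `α` of `H`, `α(ker φ) = ker φ` iff `α(ker (q^{(p)} ∘ φ)) = ker (q^{(p)} ∘ φ)`
for every `p`. -/
theorem stmt13 {ι : Type*} [Fintype ι] (prm : ι → ℕ) (hprm : ∀ i, (prm i).Prime)
    (hinj : Function.Injective prm) (G : ι → Type*) [∀ i, CommGroup (G i)]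
    [∀ i, Finite (G i)] (hpg : ∀ i, IsPGroup (prm i) (G i))
    (H : Type*) [CommGroup H] (φ : H →* ((i : ι) → G i)) :
    (Function.Surjective φ ↔ ∀ i, Function.Surjective ((Pi.evalMonoidHom G i).comp φ)) ∧
    (∀ α : H ≃* H,
      Subgroup.map α.toMonoidHom φ.ker = φ.ker ↔
        ∀ i, Subgroup.map α.toMonoidHom ((Pi.evalMonoidHom G i).comp φ).ker =
          ((Pi.evalMonoidHom G i).comp φ).ker) := by
  classical
  -- N i : product of cards of other factors
  set N : ι → ℕ := fun i => ∏ j ∈ Finset.univ.erase i, Nat.card (G j) with hN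
  have hcop : ∀ i, (Nat.card (G i)).Coprime (N i) := by
    intro i
    apply Nat.Coprime.prod_right
    intro j hj
    have : Fact (prm i).Prime := ⟨hprm i⟩
    have : Fact (prm j).Prime := ⟨hprm j⟩
    obtain ⟨a, ha⟩ := IsPGroup.iff_card.mp (hpg i)
    obtain ⟨b, hb⟩ := IsPGroup.iff_card.mp (hpg j)
    rw [ha, hb]
    exact ((Nat.coprime_primes (hprm i) (hprm j)).mpr
      (fun h => (Finset.mem_erase.mp hj).1 (hinj h).symm)).pow a b
  have hdvd : ∀ i j, j ≠ i → Nat.card (G j) ∣ N i := fun i j hj =>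
    Finset.dvd_prod_of_mem _ (Finset.mem_erase.mpr ⟨hj, Finset.mem_univ j⟩)
  -- killing off-components
  have hkill : ∀ i j (x : G j), j ≠ i → x ^ N i = 1 := by
    intro i j x hj
    obtain ⟨k, hk⟩ := hdvd i j hj
    rw [hk, pow_mul, pow_card_eq_one', one_pow]
  have hbij : ∀ i, Function.Bijective (fun x : G i => x ^ N i) :=
    fun i => (powCoprime (hcop i)).bijective
  have hinjpow : ∀ i (x : G i), x ^ N i = 1 → x = 1 := by
    intro i x hx
    have := (hbij i).1 (a₁ := x) (a₂ := 1) (by simpa using hx)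
    exact this
  constructor
  · constructor
    · intro hs i
      exact (Function.surjective_eval i).comp hs
    · intro hs t
      have hmem : ∀ i, Pi.mulSingle i (t i) ∈ φ.range := by
        intro i
        obtain ⟨u, hu⟩ := (hbij i).2 (t i)
        obtain ⟨x, hx⟩ := hs i u
        refine ⟨x ^ N i, ?_⟩
        rw [map_pow]
        funext j
        by_cases hji : j = i
        · subst hji
          simp only [Pi.pow_apply, Pi.mulSingle_eq_same]
          rw [show φ x j = u from hx]
          exact hu
        · simp only [Pi.pow_apply, Pi.mulSingle_eq_of_ne hji]
          exact hkill i j _ hji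
      obtain ⟨x, hx⟩ : t ∈ φ.range := by
        rw [← Finset.univ_prod_mulSingle t]
        exact Subgroup.prod_mem _ fun i _ => hmem i
      exact ⟨x, hx⟩
  · -- kernel part
    have hmapiff : ∀ (α : H ≃* H) (K : Subgroup H),
        Subgroup.map α.toMonoidHom K = K ↔ ∀ h, h ∈ K ↔ α h ∈ K := by
      intro α K
      constructor
      · intro hK h
        constructor
        · intro hh
          rw [← hK]; exact ⟨h, hh, rfl⟩
        · intro hh
          rw [← hK] at hh
          obtain ⟨y, hy, hy2⟩ := hh
          have : y = h := α.injective hy2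
          exact this ▸ hy
      · intro hK
        ext x
        constructor
        · rintro ⟨y, hy, rfl⟩
          exact (hK y).mp hy
        · intro hx
          exact ⟨α.symm x, by
            have := (hK (α.symm x)).mpr
            simp only [MulEquiv.apply_symm_apply] at this
            exact this hx, by simp⟩
    have hker_i : ∀ i (h : H), h ∈ ((Pi.evalMonoidHom G i).comp φ).ker ↔ h ^ N i ∈ φ.ker := by
      intro i h
      simp only [MonoidHom.mem_ker, MonoidHom.comp_apply, Pi.evalMonoidHom_apply, map_pow]
      constructor
      · intro hh
        funext j
        by_cases hji : j = i
        · subst hji; simp only [Pi.pow_apply, hh, one_pow, Pi.one_apply]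
        · simp only [Pi.pow_apply, Pi.one_apply]; exact hkill i j _ hji
      · intro hh
        apply hinjpow i
        have := congrFun hh i
        simpa using this
    have hkerK : ∀ h : H, h ∈ φ.ker ↔ ∀ i, h ∈ ((Pi.evalMonoidHom G i).comp φ).ker := by
      intro h
      simp only [MonoidHom.mem_ker, MonoidHom.comp_apply, Pi.evalMonoidHom_apply]
      constructor
      · intro hh i; rw [hh]; rfl
      · intro hh; funext i; exact hh i
    intro α
    rw [hmapiff]
    constructor
    · intro hK i
      rw [hmapiff]
      intro h
      rw [hker_i, hker_i, hK, map_pow]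
    · intro hK h
      simp only [hmapiff] at hK
      rw [hkerK, hkerK]
      exact forall_congr' fun i => hK i h
end

section
/- Let σ be a permutation of {1,…,m} and let P ∈ (Z/p^k Z)^{l×m} with P_{i,j} = δ_{i,j}·p^{r_i} (0 ≤ r_1 ≤ ⋯ ≤ r_l < k, r_i := k for i > l). If r_{σ(i)} = r_i for all i, then the permutation matrix of σ is P-equivalent to the identity, i.e., ⟨Pσ⟩ = ⟨P⟩, where σ also denotes its permutation matrix. -/
/-- If a permutation `σ` of the columns satisfies `r (σ i) = r i` for the extended
exponent sequence, then the permutation matrix of `σ` is `P`-equivalent to the identity: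
`⟨P σ⟩ = ⟨P⟩`. -/
theorem stmt15 (p : ℕ) (hp : p.Prime) (k : ℕ) (hk : 1 ≤ k) (l m : ℕ) (hlm : l ≤ m)
    (r : Fin l → ℕ) (hmono : Monotone r) (hr : ∀ i, r i < k)
    (P : Matrix (Fin l) (Fin m) (ZMod (p ^ k)))
    (hP : ∀ i j, P i j = if (i : ℕ) = (j : ℕ) then (p : ZMod (p ^ k)) ^ (r i) else 0)
    (rext : Fin m → ℕ) (hrext : ∀ j : Fin m, rext j = if h : (j : ℕ) < l then r ⟨j, h⟩ else k)
    (σ : Equiv.Perm (Fin m)) (hσ : ∀ i, rext (σ i) = rext i) :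
    rowSpace (P * permMat σ) = rowSpace P := by
  set Q : Matrix (Fin l) (Fin m) (ZMod (p ^ k)) := P * permMat σ with hQ
  have hmul : ∀ (i : Fin l) (j : Fin m), Q i j = P i (σ j) := by
    intro i j
    rw [hQ]
    show (∑ x, P i x * permMat σ x j) = _
    simp [permMat, mul_ite, Finset.sum_ite_eq']
  set ι : Fin l → Fin m := Fin.castLE hlm with hι
  have hιval : ∀ i : Fin l, ((ι i : Fin m) : ℕ) = (i : ℕ) := fun i => rfl
  have hkey : ∀ i : Fin l, rext (ι i) = rext (σ⁻¹ (ι i)) := by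
    intro i
    have h1 := hσ (σ⁻¹ (ι i))
    rwa [Equiv.Perm.coe_inv, Equiv.apply_symm_apply] at h1
  have hlt : ∀ i : Fin l, ((σ⁻¹ (ι i) : Fin m) : ℕ) < l := by
    intro i
    by_contra h
    have h1 := hkey i
    rw [hrext, hrext, dif_neg h, dif_pos (by rw [hιval]; exact i.isLt)] at h1
    exact absurd h1 (Nat.ne_of_lt (hr _))
  set τ : Fin l → Fin l := fun i => ⟨((σ⁻¹ (ι i) : Fin m) : ℕ), hlt i⟩ with hτ
  have hτval : ∀ i : Fin l, ((τ i : Fin l) : ℕ) = ((σ⁻¹ (ι i) : Fin m) : ℕ) := fun i => rfl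
  have hrτ : ∀ i : Fin l, r (τ i) = r i := by
    intro i
    have h1 := hkey i
    rw [hrext, hrext, dif_pos (hlt i), dif_pos (by rw [hιval]; exact i.isLt)] at h1
    exact h1.symm.trans (congrArg r (Fin.ext (hιval i)))
  have hrow : ∀ i : Fin l, Q i = P (τ i) := by
    intro i
    funext c
    rw [hmul, hP, hP, hrτ]
    have hiff : ((i : ℕ) = ((σ c : Fin m) : ℕ)) ↔ (((τ i : Fin l) : ℕ) = (c : ℕ)) := by
      rw [hτval]
      constructor
      · intro h
        have h2 : ι i = σ c := Fin.ext (by rw [hιval]; exact h)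
        have h3 : σ⁻¹ (ι i) = c := by rw [h2, Equiv.Perm.coe_inv, Equiv.symm_apply_apply]
        exact congrArg Fin.val h3
      · intro h
        have h2 : σ⁻¹ (ι i) = c := Fin.ext h
        have h3 : ι i = σ c := by rw [← h2, Equiv.Perm.coe_inv, Equiv.apply_symm_apply]
        rw [← hιval i, h3]
    rw [if_congr hiff rfl rfl]
  have hinj : Function.Injective τ := by
    intro a b hab
    have h1 : ((σ⁻¹ (ι a) : Fin m) : ℕ) = ((σ⁻¹ (ι b) : Fin m) : ℕ) := by
      rw [← hτval a, ← hτval b, hab]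
    have h2 : σ⁻¹ (ι a) = σ⁻¹ (ι b) := Fin.ext h1
    have h3 : ι a = ι b := σ⁻¹.injective h2
    exact Fin.ext (by rw [← hιval a, ← hιval b, h3])
  have hsurj : Function.Surjective τ := Finite.surjective_of_injective hinj
  have hrange : (Set.range fun i => Q i) = Set.range fun i => P i := by
    have heq : (fun i => Q i) = (fun i => P i) ∘ τ := funext hrow
    rw [heq, Set.range_comp, Set.range_eq_univ.mpr hsurj, Set.image_univ]
  unfold rowSpace
  rw [hrange]
end

section
/- The automorphism group of the Petersen graph is isomorphic to the symmetric group S_5. -/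
/-- The Petersen graph: vertices are the 2-element subsets of a 5-element set,
two vertices being adjacent iff they are disjoint. -/
def Petersen : SimpleGraph {s : Finset (Fin 5) // s.card = 2} where
  Adj a b := Disjoint a.1 b.1
  symm := ⟨fun a b h => h.symm⟩
  loopless := by
    constructor
    intro a h
    have h2 : (a : Finset (Fin 5)) = ∅ := by simpa using (disjoint_self.mp h)
    have := a.2
    rw [h2] at this
    simp at this

abbrev PV := {s : Finset (Fin 5) // s.card = 2}

def mkP (x y : Fin 5) (h : x ≠ y) : PV :=
  ⟨{x, y}, by rw [Finset.card_insert_of_notMem (by simpa using h), Finset.card_singleton]⟩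

lemma mkP_comm (x y : Fin 5) (h : x ≠ y) : mkP x y h = mkP y x h.symm :=
  Subtype.ext (Finset.pair_comm x y)

lemma mem_mkP_left (x y : Fin 5) (h : x ≠ y) : x ∈ (mkP x y h).1 := by simp [mkP]

lemma mem_mkP_right (x y : Fin 5) (h : x ≠ y) : y ∈ (mkP x y h).1 := by simp [mkP]

lemma mkP_inj {x a b : Fin 5} (h1 : x ≠ a) (h2 : x ≠ b) (H : mkP x a h1 = mkP x b h2) :
    a = b := by
  have : a ∈ (mkP x b h2).1 := H ▸ mem_mkP_right x a h1
  simp [mkP] at this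
  rcases this with h | h
  · exact absurd h.symm h1
  · exact h

lemma not_adj_mkP {x a b : Fin 5} (h1 : x ≠ a) (h2 : x ≠ b) :
    ¬ Petersen.Adj (mkP x a h1) (mkP x b h2) := fun had =>
  Finset.disjoint_left.1 had (mem_mkP_left x a h1) (mem_mkP_left x b h2)

set_option synthInstance.maxSize 3000 in
set_option maxHeartbeats 4000000 in
lemma lemA : ∀ a b c d : PV, a ≠ b → a ≠ c → a ≠ d → b ≠ c → b ≠ d → c ≠ d →
    ¬ Disjoint a.1 b.1 → ¬ Disjoint a.1 c.1 → ¬ Disjoint a.1 d.1 →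
    ¬ Disjoint b.1 c.1 → ¬ Disjoint b.1 d.1 → ¬ Disjoint c.1 d.1 →
    ∃ z : Fin 5, z ∈ a.1 ∧ z ∈ b.1 ∧ z ∈ c.1 ∧ z ∈ d.1 := by decide

lemma exists_cd : ∀ x y : Fin 5, x ≠ y →
    ∃ c d : Fin 5, c ≠ d ∧ c ≠ x ∧ c ≠ y ∧ d ≠ x ∧ d ≠ y := by decide

set_option maxRecDepth 10000 in
lemma ker_triv : ∀ σ : Equiv.Perm (Fin 5), (∀ s : PV, s.1.image σ = s.1) → σ = 1 := by decide

def permIso (σ : Equiv.Perm (Fin 5)) : Petersen ≃g Petersen where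
  toFun s := ⟨s.1.image σ, by rw [Finset.card_image_of_injective _ σ.injective, s.2]⟩
  invFun s := ⟨s.1.image σ.symm, by rw [Finset.card_image_of_injective _ σ.symm.injective, s.2]⟩
  left_inv s := Subtype.ext (by simp [Finset.image_image])
  right_inv s := Subtype.ext (by simp [Finset.image_image])
  map_rel_iff' := by
    intro a b
    show Disjoint _ _ ↔ Disjoint a.1 b.1
    exact Finset.disjoint_image σ.injective

def φ : Equiv.Perm (Fin 5) →* (Petersen ≃g Petersen) where
  toFun := permIso
  map_one' := RelIso.ext fun s => Subtype.ext (by simp [permIso])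
  map_mul' σ τ := RelIso.ext fun s => Subtype.ext (by
    simp [permIso, RelIso.mul_apply, Finset.image_image])

lemma four_common (f : Petersen ≃g Petersen) (x a b c d : Fin 5)
    (hnd : ([x, a, b, c, d] : List (Fin 5)).Nodup)
    (hall : ∀ y : Fin 5, y = x ∨ y = a ∨ y = b ∨ y = c ∨ y = d) :
    ∃ z : Fin 5, ∀ y, (h : x ≠ y) → z ∈ (f (mkP x y h)).1 := by
  simp only [List.nodup_cons, List.mem_cons, List.mem_singleton, List.nodup_nil,
    List.not_mem_nil, or_false, not_or] at hnd
  obtain ⟨⟨hxa, hxb, hxc, hxd⟩, ⟨hab, hac, had⟩, ⟨hbc, hbd⟩, hcd, -⟩ := hnd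
  have hi : Function.Injective f := f.injective
  have hne : ∀ (p q : Fin 5) (hp : x ≠ p) (hq : x ≠ q), p ≠ q →
      f (mkP x p hp) ≠ f (mkP x q hq) := by
    intro p q hp hq hpq H
    exact hpq (mkP_inj hp hq (hi H))
  have hnd' : ∀ (p q : Fin 5) (hp : x ≠ p) (hq : x ≠ q),
      ¬ Disjoint (f (mkP x p hp)).1 (f (mkP x q hq)).1 := by
    intro p q hp hq H
    exact not_adj_mkP hp hq (f.map_adj_iff.1 H)
  obtain ⟨z, h1, h2, h3, h4⟩ := lemA (f (mkP x a hxa)) (f (mkP x b hxb)) (f (mkP x c hxc))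
    (f (mkP x d hxd)) (hne a b hxa hxb hab) (hne a c hxa hxc hac) (hne a d hxa hxd had)
    (hne b c hxb hxc hbc) (hne b d hxb hxd hbd) (hne c d hxc hxd hcd)
    (hnd' a b hxa hxb) (hnd' a c hxa hxc) (hnd' a d hxa hxd)
    (hnd' b c hxb hxc) (hnd' b d hxb hxd) (hnd' c d hxc hxd)
  refine ⟨z, fun y h => ?_⟩
  rcases hall y with rfl | rfl | rfl | rfl | rfl
  · exact absurd rfl h
  · exact h1
  · exact h2
  · exact h3
  · exact h4

lemma star_common (f : Petersen ≃g Petersen) (x : Fin 5) :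
    ∃ z : Fin 5, ∀ y, (h : x ≠ y) → z ∈ (f (mkP x y h)).1 := by
  fin_cases x
  · exact four_common f 0 1 2 3 4 (by decide) (by decide)
  · exact four_common f 1 0 2 3 4 (by decide) (by decide)
  · exact four_common f 2 0 1 3 4 (by decide) (by decide)
  · exact four_common f 3 0 1 2 4 (by decide) (by decide)
  · exact four_common f 4 0 1 2 3 (by decide) (by decide)

/-- The automorphism group of the Petersen graph is isomorphic to the symmetric
group `S₅`. -/
theorem stmt16 : Nonempty ((Petersen ≃g Petersen) ≃* Equiv.Perm (Fin 5)) := by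
  have hinj : Function.Injective φ := by
    rw [injective_iff_map_eq_one]
    intro σ hσ
    apply ker_triv
    intro s
    have := congrArg Subtype.val (DFunLike.congr_fun hσ s)
    exact this
  have hsurj : Function.Surjective φ := by
    intro f
    set σ' : Fin 5 → Fin 5 := fun x => (star_common f x).choose with hσ'def
    have hσ' : ∀ x y, (h : x ≠ y) → σ' x ∈ (f (mkP x y h)).1 :=
      fun x => (star_common f x).choose_spec
    have hne : ∀ x y, x ≠ y → σ' x ≠ σ' y := by
      intro x y h heq
      obtain ⟨c, d, hcd, hcx, hcy, hdx, hdy⟩ := exists_cd x y h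
      have h1 : σ' x ∈ (f (mkP x c hcx.symm)).1 := hσ' x c hcx.symm
      have h2 : σ' y ∈ (f (mkP y d hdy.symm)).1 := hσ' y d hdy.symm
      have hadj : Petersen.Adj (mkP x c hcx.symm) (mkP y d hdy.symm) := by
        show Disjoint _ _
        rw [Finset.disjoint_left]
        intro u hu hv
        simp [mkP] at hu hv
        rcases hu with rfl | rfl <;> rcases hv with rfl | rfl
        · exact h rfl
        · exact hdx rfl
        · exact hcy rfl
        · exact hcd rfl
      have hd : Disjoint (f (mkP x c hcx.symm)).1 (f (mkP y d hdy.symm)).1 :=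
        f.map_adj_iff.2 hadj
      exact Finset.disjoint_left.1 hd h1 (heq ▸ h2)
    have key : ∀ x y (h : x ≠ y), f (mkP x y h) = mkP (σ' x) (σ' y) (hne x y h) := by
      intro x y h
      have m1 : σ' x ∈ (f (mkP x y h)).1 := hσ' x y h
      have m2 : σ' y ∈ (f (mkP x y h)).1 := by
        have := hσ' y x h.symm
        rwa [← mkP_comm x y h] at this
      apply Subtype.ext
      refine (Finset.eq_of_subset_of_card_le ?_ ?_).symm
      · intro u hu
        simp [mkP] at hu
        rcases hu with rfl | rfl
        · exact m1
        · exact m2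
      · rw [(f (mkP x y h)).2, (mkP (σ' x) (σ' y) (hne x y h)).2]
    have hbij : Function.Bijective σ' :=
      Finite.injective_iff_bijective.1 (fun x y hxy => by
        by_contra h
        exact hne x y h hxy)
    refine ⟨Equiv.ofBijective σ' hbij, ?_⟩
    apply RelIso.ext
    intro s
    obtain ⟨x, y, hxy, hs⟩ := Finset.card_eq_two.1 s.2
    have hs' : s = mkP x y hxy := Subtype.ext hs
    rw [hs', key x y hxy]
    apply Subtype.ext
    show ({x, y} : Finset (Fin 5)).image σ' = {σ' x, σ' y}
    simp
  exact ⟨(MulEquiv.ofBijective φ ⟨hinj, hsurj⟩).symm⟩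
end

section
/- Let p be prime, k ≥ 1, 1 ≤ r ≤ k, and suppose Q ∈ GL(b, Z/p^k Z) is block upper-triangular of the form [[Q_1, Q_2],[0, Q_3]] with Q_1 invertible of size i × i. Define Q̄ ∈ GL(b, Z/p^r Z) as the reduction mod p^r of [[I, Q_1^{-1}Q_2],[0, I]]. If for some matrix S ∈ GL(b, Z/p^k Z) the matrix Q S Q^{-1} reduced mod p^r has zero upper-right i × (b−i) block, then Q̄ S̄ Q̄^{-1} also has zero upper-right i × (b−i) block, where S̄ is the reduction of S mod p^r. -/
/-- Reduction of admissible solutions to lower exponents (key linear algebra step):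
if `Q = [[Q₁, Q₂],[0, Q₃]]` is an invertible block upper-triangular matrix over
`ZMod (p^k)` with `Q₁` invertible, `Q̄` is the reduction mod `p^r` of
`[[I, Q₁⁻¹Q₂],[0, I]]`, and for some invertible `S` the matrix `Q S Q⁻¹` reduced mod
`p^r` has zero upper-right block, then `Q̄ S̄ Q̄⁻¹` also has zero upper-right block. -/
theorem stmt19 (p : ℕ) (hp : p.Prime) (k r : ℕ) (hr1 : 1 ≤ r) (hrk : r ≤ k)
    (i j : ℕ)
    (Q1 : Matrix (Fin i) (Fin i) (ZMod (p ^ k)))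
    (Q2 : Matrix (Fin i) (Fin j) (ZMod (p ^ k)))
    (Q3 : Matrix (Fin j) (Fin j) (ZMod (p ^ k)))
    (hQ1 : IsUnit Q1)
    (Q : Matrix (Fin i ⊕ Fin j) (Fin i ⊕ Fin j) (ZMod (p ^ k)))
    (hQ : Q = Matrix.fromBlocks Q1 Q2 0 Q3)
    (hQunit : IsUnit Q)
    (S : Matrix (Fin i ⊕ Fin j) (Fin i ⊕ Fin j) (ZMod (p ^ k)))
    (hS : IsUnit S)
    (c : ZMod (p ^ k) →+* ZMod (p ^ r))
    (hc : c = ZMod.castHom (pow_dvd_pow p hrk) (ZMod (p ^ r)))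
    (Qbar : Matrix (Fin i ⊕ Fin j) (Fin i ⊕ Fin j) (ZMod (p ^ r)))
    (hQbar : Qbar = (Matrix.fromBlocks 1 (Q1⁻¹ * Q2) 0 1).map c)
    (hzero : ∀ (a : Fin i) (d : Fin j),
      ((Q * S * Q⁻¹).map c) (Sum.inl a) (Sum.inr d) = 0) :
    ∀ (a : Fin i) (d : Fin j),
      (Qbar * S.map c * Qbar⁻¹) (Sum.inl a) (Sum.inr d) = 0 := by
  classical
  -- notation
  set X : Matrix (Fin i) (Fin j) (ZMod (p ^ k)) := Q1⁻¹ * Q2 with hX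
  set U : Matrix (Fin i ⊕ Fin j) (Fin i ⊕ Fin j) (ZMod (p ^ k)) :=
    Matrix.fromBlocks 1 X 0 1 with hU
  set V : Matrix (Fin i ⊕ Fin j) (Fin i ⊕ Fin j) (ZMod (p ^ k)) :=
    Matrix.fromBlocks 1 (-X) 0 1 with hV
  set D : Matrix (Fin i ⊕ Fin j) (Fin i ⊕ Fin j) (ZMod (p ^ k)) :=
    Matrix.fromBlocks Q1 0 0 Q3 with hD
  have hdet1 : IsUnit Q1.det := (Matrix.isUnit_iff_isUnit_det _).mp hQ1
  have hdetQ : IsUnit Q.det := (Matrix.isUnit_iff_isUnit_det _).mp hQunit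
  have hdetQ' : IsUnit (Q1.det * Q3.det) := by
    rwa [hQ, Matrix.det_fromBlocks_zero₂₁] at hdetQ
  have hdet3 : IsUnit Q3.det := isUnit_of_mul_isUnit_right hdetQ'
  -- Q = D * U
  have hDU : Q = D * U := by
    rw [hQ, hD, hU, Matrix.fromBlocks_multiply]
    simp [hX, Matrix.mul_nonsing_inv_cancel_left Q1 Q2 hdet1]
  -- U * V = 1
  have hUV : U * V = 1 := by
    rw [hU, hV, Matrix.fromBlocks_multiply]
    simp [Matrix.fromBlocks_one]
  have hUinv : U⁻¹ = V := Matrix.inv_eq_right_inv hUV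
  -- D⁻¹
  have hDinv : D⁻¹ = Matrix.fromBlocks Q1⁻¹ 0 0 Q3⁻¹ := by
    apply Matrix.inv_eq_right_inv
    rw [hD, Matrix.fromBlocks_multiply]
    simp [Matrix.mul_nonsing_inv _ hdet1, Matrix.mul_nonsing_inv _ hdet3,
      Matrix.fromBlocks_one]
  have hQinv : Q⁻¹ = V * D⁻¹ := by
    rw [hDU, Matrix.mul_inv_rev, hUinv]
  set M : Matrix (Fin i ⊕ Fin j) (Fin i ⊕ Fin j) (ZMod (p ^ k)) := U * S * V with hM
  have hconj : Q * S * Q⁻¹ = D * M * D⁻¹ := by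
    rw [hQinv, hDU, hM]
    simp only [Matrix.mul_assoc]
  set B : Matrix (Fin i) (Fin j) (ZMod (p ^ k)) := M.toBlocks₁₂ with hB
  -- the (1,2) block of D * M * D⁻¹ is Q1 * B * Q3⁻¹
  have hblock : ∀ (a : Fin i) (d : Fin j),
      (D * M * D⁻¹) (Sum.inl a) (Sum.inr d) = (Q1 * B * Q3⁻¹) a d := by
    intro a d
    conv_lhs => rw [← Matrix.fromBlocks_toBlocks M, hDinv, hD,
      Matrix.fromBlocks_multiply, Matrix.fromBlocks_multiply]
    simp [Matrix.mul_assoc, hB]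
  -- hence (Q1 * B * Q3⁻¹).map c = 0
  have hzero' : (Q1 * B * Q3⁻¹).map c = 0 := by
    ext a d
    have := hzero a d
    rw [hconj] at this
    simpa [Matrix.map_apply, hblock a d] using this
  -- mapped identities
  have h3 : (Q3⁻¹).map c * Q3.map c = 1 := by
    rw [← Matrix.map_mul, Matrix.nonsing_inv_mul _ hdet3, Matrix.map_one _ c.map_zero c.map_one]
  have h1 : (Q1⁻¹).map c * Q1.map c = 1 := by
    rw [← Matrix.map_mul, Matrix.nonsing_inv_mul _ hdet1, Matrix.map_one _ c.map_zero c.map_one]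
  have hBmap : B.map c = 0 := by
    rw [Matrix.map_mul, Matrix.map_mul] at hzero'
    have e1 : Q1.map c * B.map c * ((Q3⁻¹).map c * Q3.map c) = 0 := by
      rw [← Matrix.mul_assoc, hzero', Matrix.zero_mul]
    rw [h3, Matrix.mul_one] at e1
    calc B.map c = (Q1⁻¹).map c * Q1.map c * B.map c := by rw [h1, Matrix.one_mul]
      _ = (Q1⁻¹).map c * (Q1.map c * B.map c) := by rw [Matrix.mul_assoc]
      _ = 0 := by rw [e1, Matrix.mul_zero]
  -- Qbar and its inverse
  have hQbarU : Qbar = U.map c := by rw [hQbar, hU, hX]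
  have hQbarinv : Qbar⁻¹ = V.map c := by
    apply Matrix.inv_eq_right_inv
    rw [hQbarU, ← Matrix.map_mul, hUV, Matrix.map_one _ c.map_zero c.map_one]
  intro a d
  have : Qbar * S.map c * Qbar⁻¹ = M.map c := by
    rw [hQbarinv, hQbarU, hM, Matrix.map_mul, Matrix.map_mul]
  rw [this]
  have : M (Sum.inl a) (Sum.inr d) = B a d := rfl
  simp [Matrix.map_apply, this, show B.map c a d = 0 from by rw [hBmap]; rfl] at *
  exact (congrFun (congrFun hBmap a) d)
end
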